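/- Let μ = m₁ϖ₁ + m₂ϖ₂ be a K-type of the split real group G₂₍₂₎, i.e. (m₁,m₂) ∈ ℕ² with m₁+m₂ even. Then ‖μ‖_spin = ‖μ‖_lambda if and only if (m₁,m₂) has one of the following forms: (a+3b+2, a+b) for some a,b ∈ ℕ with a+b ≥ 1; or (2a+3b+3, b−1) for some a ∈ ℕ and b ≥ 1; or (a−1, a+2b+1) for some a ≥ 1 and b ∈ ℕ. -/

import Mathlib

/-!
Spin norm = lambda norm classification for the K-types of the split group G₂₍₂₎.
All constructions take place in `ℝ³`; the ambient space `V` of the G₂ root system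
is the hyperplane `x₁ + x₂ + x₃ = 0`.
-/

noncomputable section

open scoped RealInnerProductSpace

namespace Stmt2

abbrev E3 : Type := EuclideanSpace ℝ (Fin 3)

def e (i : Fin 3) : E3 := EuclideanSpace.single i 1

/-- Membership in the hyperplane `V = {x : x₁+x₂+x₃ = 0}`. -/
def InV (v : E3) : Prop := v 0 + v 1 + v 2 = 0

/-- The root system of type `G₂` in `V`: the 12 vectors `±(eᵢ−eⱼ)` (i<j) and
`±(2eᵢ−eⱼ−e_k)` ({i,j,k} = {1,2,3}), the latter written as `±(3eᵢ − (e₁+e₂+e₃))`. -/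
def ΔG2 : Set E3 :=
  {v | (∃ i j, i ≠ j ∧ v = e i - e j) ∨
       (∃ i, v = (3 : ℝ) • e i - (e 0 + e 1 + e 2) ∨
             v = (e 0 + e 1 + e 2) - (3 : ℝ) • e i)}

/-- `P` is a positive system of the finite root system `S` (inside `V`). -/
def IsPosSystem (S P : Set E3) : Prop :=
  ∃ v : E3, InV v ∧ (∀ α ∈ S, ⟪α, v⟫ ≠ 0) ∧ P = {α | α ∈ S ∧ 0 < ⟪α, v⟫}

/-- Half sum of the (finitely many) elements of `S`. -/
def halfSum (S : Set E3) : E3 := (2 : ℝ)⁻¹ • ∑ᶠ α ∈ S, α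

/-- `w` is the reflection in a root `α ∈ Δ`. -/
def IsReflIn (Δ : Set E3) (w : E3 ≃ₗᵢ[ℝ] E3) : Prop :=
  ∃ α ∈ Δ, ∀ x : E3, w x = x - (2 * ⟪x, α⟫ / ⟪α, α⟫) • α

/-- The group generated by the reflections in the elements of `Δ`. -/
def WeylGroup (Δ : Set E3) : Subgroup (E3 ≃ₗᵢ[ℝ] E3) :=
  Subgroup.closure {w | IsReflIn Δ w}

/-- `ξ` is dominant with respect to the positive roots `Δplus`. -/
def IsDom (Δplus : Set E3) (ξ : E3) : Prop := ∀ γ ∈ Δplus, 0 ≤ ⟪ξ, γ⟫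

/-- `γ₁ = e₁ − e₂`. -/
def γ1 : E3 := e 0 - e 1

/-- `γ₂ = −e₁ − e₂ + 2e₃`. -/
def γ2 : E3 := (3 : ℝ) • e 2 - (e 0 + e 1 + e 2)

/-- The compact roots `{±γ₁, ±γ₂}`. -/
def Δk : Set E3 := {γ1, -γ1, γ2, -γ2}

/-- The positive compact roots `{γ₁, γ₂}`. -/
def Δplusk : Set E3 := {γ1, γ2}

/-- The noncompact roots (8 of them). -/
def Δp : Set E3 := ΔG2 \ Δk

def ϖ1 : E3 := (2 : ℝ)⁻¹ • γ1

def ϖ2 : E3 := (2 : ℝ)⁻¹ • γ2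

/-- `ρ_c = ϖ₁ + ϖ₂`. -/
def ρc : E3 := ϖ1 + ϖ2

/-- The K-type `m₁ϖ₁ + m₂ϖ₂`. -/
def mu (m₁ m₂ : ℕ) : E3 := (m₁ : ℝ) • ϖ1 + (m₂ : ℝ) • ϖ2

/-- The spin norm: the minimum over compatible `P ⊆ Δ(p)` of `‖{μ − ρ(P)} + ρ_c‖`,
where `{ξ}` is the unique `Δ⁺(k)`-dominant element of the `W(k)`-orbit of `ξ`. -/
def spinNorm (μ : E3) : ℝ :=
  sInf {r | ∃ P ⊆ Δp, IsPosSystem ΔG2 (Δplusk ∪ P) ∧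
    ∃ d : E3, IsDom Δplusk d ∧ (∃ w ∈ WeylGroup Δk, w (μ - halfSum P) = d) ∧
      r = ‖d + ρc‖}

/-- The lambda norm `‖λ_a(μ)‖`, where `λ_a(μ)` is the point of the closed dominant
cone (inside `V`) of a positive system `D` of `ΔG2` making `μ + 2ρ_c` dominant
which is nearest to `μ + 2ρ_c − ρ'`. -/
def lambdaNorm (μ : E3) : ℝ :=
  sInf {r | ∃ D : Set E3, IsPosSystem ΔG2 D ∧
    (∀ α ∈ D, 0 ≤ ⟪μ + (2 : ℝ) • ρc, α⟫) ∧
    ∃ la : E3, InV la ∧ (∀ α ∈ D, 0 ≤ ⟪la, α⟫) ∧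
      (∀ v : E3, InV v → (∀ α ∈ D, 0 ≤ ⟪v, α⟫) →
        ‖μ + (2 : ℝ) • ρc - halfSum D - la‖ ≤ ‖μ + (2 : ℝ) • ρc - halfSum D - v‖) ∧
      r = ‖la‖}


/-! ### Coordinate infrastructure -/

def V3 (a b c : ℝ) : E3 := a • e 0 + b • e 1 + c • e 2

lemma ext3 {x y : E3} (h0 : x 0 = y 0) (h1 : x 1 = y 1) (h2 : x 2 = y 2) : x = y := by
  ext i; fin_cases i <;> assumption

@[simp] lemma V3_apply_0 (a b c : ℝ) : V3 a b c 0 = a := by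
  simp [V3, e, EuclideanSpace.single_apply]
@[simp] lemma V3_apply_1 (a b c : ℝ) : V3 a b c 1 = b := by
  simp [V3, e, EuclideanSpace.single_apply]
@[simp] lemma V3_apply_2 (a b c : ℝ) : V3 a b c 2 = c := by
  simp [V3, e, EuclideanSpace.single_apply]

lemma eq_V3 (x : E3) : x = V3 (x 0) (x 1) (x 2) := by apply ext3 <;> simp

lemma V3_inj {a b c d e f : ℝ} : V3 a b c = V3 d e f ↔ a = d ∧ b = e ∧ c = f := by
  constructor
  · intro h
    exact ⟨by rw [← V3_apply_0 a b c, h]; simp, by rw [← V3_apply_1 a b c, h]; simp,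
      by rw [← V3_apply_2 a b c, h]; simp⟩
  · rintro ⟨rfl, rfl, rfl⟩; rfl

@[simp] lemma V3_add (a b c d e f : ℝ) : V3 a b c + V3 d e f = V3 (a+d) (b+e) (c+f) := by
  apply ext3 <;> simp
@[simp] lemma V3_sub (a b c d e f : ℝ) : V3 a b c - V3 d e f = V3 (a-d) (b-e) (c-f) := by
  apply ext3 <;> simp
@[simp] lemma V3_smul (r a b c : ℝ) : r • V3 a b c = V3 (r*a) (r*b) (r*c) := by
  apply ext3 <;> simp
@[simp] lemma V3_neg (a b c : ℝ) : -V3 a b c = V3 (-a) (-b) (-c) := by apply ext3 <;> simp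

lemma inner3 (x y : E3) : ⟪x, y⟫ = x 0 * y 0 + x 1 * y 1 + x 2 * y 2 := by
  simp [PiLp.inner_apply, Fin.sum_univ_three, mul_comm]
@[simp] lemma inner_V3 (a b c d e f : ℝ) : ⟪V3 a b c, V3 d e f⟫ = a*d + b*e + c*f := by
  simp [inner3, Fin.sum_univ_three]

lemma e0_eq : e 0 = V3 1 0 0 := by apply ext3 <;> simp [e, EuclideanSpace.single_apply]
lemma e1_eq : e 1 = V3 0 1 0 := by apply ext3 <;> simp [e, EuclideanSpace.single_apply]
lemma e2_eq : e 2 = V3 0 0 1 := by apply ext3 <;> simp [e, EuclideanSpace.single_apply]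

lemma InV_V3 {a b c : ℝ} : InV (V3 a b c) ↔ a + b + c = 0 := by simp [InV]

lemma norm_le_iff_inner {x y : E3} : ‖x‖ ≤ ‖y‖ ↔ ⟪x, x⟫ ≤ ⟪y, y⟫ := by
  rw [real_inner_self_eq_norm_sq, real_inner_self_eq_norm_sq]
  constructor
  · intro h; nlinarith [norm_nonneg x, norm_nonneg y]
  · intro h; nlinarith [norm_nonneg x, norm_nonneg y]

lemma norm_eq_iff_inner {x y : E3} : ‖x‖ = ‖y‖ ↔ ⟪x, x⟫ = ⟪y, y⟫ := by
  constructor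
  · intro h
    rw [real_inner_self_eq_norm_sq, real_inner_self_eq_norm_sq, h]
  · intro h
    exact le_antisymm (norm_le_iff_inner.mpr h.le) (norm_le_iff_inner.mpr h.ge)

lemma norm_lt_iff_inner {x y : E3} : ‖x‖ < ‖y‖ ↔ ⟪x, x⟫ < ⟪y, y⟫ := by
  rw [← not_le, ← not_le, norm_le_iff_inner]

/-! ### Coordinates of the named vectors -/

lemma γ1_eq : γ1 = V3 1 (-1) 0 := by
  apply ext3 <;> simp [γ1, e, EuclideanSpace.single_apply]
lemma γ2_eq : γ2 = V3 (-1) (-1) 2 := by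
  apply ext3 <;> simp [γ2, e, EuclideanSpace.single_apply] <;> norm_num
lemma ϖ1_eq : ϖ1 = V3 (1/2) (-(1/2)) 0 := by
  rw [ϖ1, γ1_eq]; simp [V3_inj] <;> norm_num
lemma ϖ2_eq : ϖ2 = V3 (-(1/2)) (-(1/2)) 1 := by
  rw [ϖ2, γ2_eq]; simp [V3_inj] <;> norm_num
lemma ρc_eq : ρc = V3 0 (-1) 1 := by
  rw [ρc, ϖ1_eq, ϖ2_eq]; simp [V3_inj] <;> norm_num
lemma mu_eq (m₁ m₂ : ℕ) :
    mu m₁ m₂ = V3 ((m₁ - m₂)/2) (-(m₁ + m₂)/2) m₂ := by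
  rw [mu, ϖ1_eq, ϖ2_eq]; simp [V3_inj]; constructor <;> ring

/-! ### Enumeration of the G2 roots -/

lemma mem_ΔG2_iff {x : E3} : x ∈ ΔG2 ↔
    x = V3 1 (-1) 0 ∨ x = V3 (-1) 1 0 ∨ x = V3 1 0 (-1) ∨ x = V3 (-1) 0 1 ∨
    x = V3 0 1 (-1) ∨ x = V3 0 (-1) 1 ∨
    x = V3 2 (-1) (-1) ∨ x = V3 (-2) 1 1 ∨ x = V3 (-1) 2 (-1) ∨ x = V3 1 (-2) 1 ∨
    x = V3 (-1) (-1) 2 ∨ x = V3 1 1 (-2) := by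
  constructor
  · rintro (⟨i, j, hij, rfl⟩ | ⟨i, (rfl | rfl)⟩)
    · fin_cases i <;> fin_cases j <;>
        simp_all [e0_eq, e1_eq, e2_eq, V3_inj] <;> norm_num
    · fin_cases i <;> simp [e0_eq, e1_eq, e2_eq, V3_inj] <;> norm_num
    · fin_cases i <;> simp [e0_eq, e1_eq, e2_eq, V3_inj] <;> norm_num
  · have h01 : (0 : Fin 3) ≠ 1 := by decide
    have h02 : (0 : Fin 3) ≠ 2 := by decide
    have h12 : (1 : Fin 3) ≠ 2 := by decide
    rintro (rfl|rfl|rfl|rfl|rfl|rfl|rfl|rfl|rfl|rfl|rfl|rfl)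
    · exact Or.inl ⟨0, 1, h01, by simp [e0_eq, e1_eq, V3_inj]⟩
    · exact Or.inl ⟨1, 0, h01.symm, by simp [e0_eq, e1_eq, V3_inj]⟩
    · exact Or.inl ⟨0, 2, h02, by simp [e0_eq, e2_eq, V3_inj]⟩
    · exact Or.inl ⟨2, 0, h02.symm, by simp [e0_eq, e2_eq, V3_inj]⟩
    · exact Or.inl ⟨1, 2, h12, by simp [e1_eq, e2_eq, V3_inj]⟩
    · exact Or.inl ⟨2, 1, h12.symm, by simp [e1_eq, e2_eq, V3_inj]⟩
    · exact Or.inr ⟨0, Or.inl (by simp [e0_eq, e1_eq, e2_eq, V3_inj]; norm_num)⟩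
    · exact Or.inr ⟨0, Or.inr (by simp [e0_eq, e1_eq, e2_eq, V3_inj]; norm_num)⟩
    · exact Or.inr ⟨1, Or.inl (by simp [e0_eq, e1_eq, e2_eq, V3_inj]; norm_num)⟩
    · exact Or.inr ⟨1, Or.inr (by simp [e0_eq, e1_eq, e2_eq, V3_inj]; norm_num)⟩
    · exact Or.inr ⟨2, Or.inl (by simp [e0_eq, e1_eq, e2_eq, V3_inj]; norm_num)⟩
    · exact Or.inr ⟨2, Or.inr (by simp [e0_eq, e1_eq, e2_eq, V3_inj]; norm_num)⟩

lemma Δk_eq : Δk = {V3 1 (-1) 0, V3 (-1) 1 0, V3 (-1) (-1) 2, V3 1 1 (-2)} := by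
  rw [Δk, γ1_eq, γ2_eq]
  norm_num

/-- The three compatible subsets of the noncompact roots. -/
def P1 : Set E3 := {V3 1 0 (-1), V3 0 (-1) 1, V3 2 (-1) (-1), V3 1 (-2) 1}
def P2 : Set E3 := {V3 (-1) 0 1, V3 0 (-1) 1, V3 2 (-1) (-1), V3 1 (-2) 1}
def P3 : Set E3 := {V3 (-1) 0 1, V3 0 (-1) 1, V3 (-2) 1 1, V3 1 (-2) 1}

/-! ### finsum over explicit finite sets -/

lemma finsum_quad {a b c d : E3} (h1 : a ≠ b) (h2 : a ≠ c) (h3 : a ≠ d)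
    (h4 : b ≠ c) (h5 : b ≠ d) (h6 : c ≠ d) :
    ∑ᶠ x ∈ ({a, b, c, d} : Set E3), x = a + b + c + d := by
  classical
  rw [show ({a,b,c,d} : Set E3) = (({a,b,c,d} : Finset E3) : Set E3) by simp,
      finsum_mem_coe_finset]
  rw [show ({a,b,c,d} : Finset E3) = insert a (insert b (insert c ({d} : Finset E3))) from rfl]
  rw [Finset.sum_insert (by simp [h1, h2, h3]), Finset.sum_insert (by simp [h4, h5]),
      Finset.sum_insert (by simp [h6]), Finset.sum_singleton]
  abel

lemma finsum_six {a b c d f g : E3} (h1 : a ≠ b) (h2 : a ≠ c) (h3 : a ≠ d) (h4 : a ≠ f)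
    (h5 : a ≠ g) (h6 : b ≠ c) (h7 : b ≠ d) (h8 : b ≠ f) (h9 : b ≠ g) (h10 : c ≠ d)
    (h11 : c ≠ f) (h12 : c ≠ g) (h13 : d ≠ f) (h14 : d ≠ g) (h15 : f ≠ g) :
    ∑ᶠ x ∈ ({a, b, c, d, f, g} : Set E3), x = a + b + c + d + f + g := by
  classical
  rw [show ({a,b,c,d,f,g} : Set E3) = (({a,b,c,d,f,g} : Finset E3) : Set E3) by simp,
      finsum_mem_coe_finset]
  rw [show ({a,b,c,d,f,g} : Finset E3)
      = insert a (insert b (insert c (insert d (insert f ({g} : Finset E3))))) from rfl]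
  rw [Finset.sum_insert (by simp [h1, h2, h3, h4, h5]),
      Finset.sum_insert (by simp [h6, h7, h8, h9]),
      Finset.sum_insert (by simp [h10, h11, h12]),
      Finset.sum_insert (by simp [h13, h14]),
      Finset.sum_insert (by simp [h15]), Finset.sum_singleton]
  abel

lemma halfSum_P1 : halfSum P1 = V3 2 (-2) 0 := by
  rw [halfSum, P1, finsum_quad] <;> simp [V3_inj] <;> norm_num
lemma halfSum_P2 : halfSum P2 = V3 1 (-2) 1 := by
  rw [halfSum, P2, finsum_quad] <;> simp [V3_inj] <;> norm_num
lemma halfSum_P3 : halfSum P3 = V3 (-1) (-1) 2 := by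
  rw [halfSum, P3, finsum_quad] <;> simp [V3_inj] <;> norm_num

/-! ### Reflections and the Weyl group of Δk -/

def ι3 : E3 := V3 1 1 1

lemma coords (ξ : E3) : ∃ a b c : ℝ, ξ = V3 a b c := ⟨ξ 0, ξ 1, ξ 2, eq_V3 ξ⟩

/-- The reflection in a nonzero vector, as a linear isometry equivalence. -/
def rfl3 (γ : E3) : E3 ≃ₗᵢ[ℝ] E3 := Submodule.reflection ((ℝ ∙ γ)ᗮ)

lemma rfl3_apply (γ : E3) (hγ : γ ≠ 0) (x : E3) :
    rfl3 γ x = x - (2 * ⟪x, γ⟫ / ⟪γ, γ⟫) • γ := by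
  have hn : ‖γ‖ ≠ 0 := norm_ne_zero_iff.mpr hγ
  have hn2 : ‖γ‖ ^ 2 ≠ 0 := pow_ne_zero 2 hn
  rw [rfl3, Submodule.reflection_apply, Submodule.starProjection_orthogonal_val,
    Submodule.starProjection_singleton, real_inner_self_eq_norm_sq γ, real_inner_comm x γ]
  apply ext3 <;> simp [two_smul] <;> field_simp <;> ring

def s1 : E3 ≃ₗᵢ[ℝ] E3 := rfl3 γ1
def s2 : E3 ≃ₗᵢ[ℝ] E3 := rfl3 γ2

lemma zero_eq : (0 : E3) = V3 0 0 0 := by apply ext3 <;> simp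

lemma γ1_ne : γ1 ≠ 0 := by
  rw [γ1_eq, zero_eq]; simp [V3_inj]
lemma γ2_ne : γ2 ≠ 0 := by
  rw [γ2_eq, zero_eq]; simp [V3_inj]

lemma s1_apply (a b c : ℝ) : s1 (V3 a b c) = V3 b a c := by
  rw [s1, rfl3_apply γ1 γ1_ne, γ1_eq]
  simp only [inner_V3, V3_smul, V3_sub, V3_inj]
  refine ⟨by ring, by ring, by ring⟩
lemma s2_apply (a b c : ℝ) : s2 (V3 a b c) = V3 (a + (-a-b+2*c)/3) (b + (-a-b+2*c)/3)
    (c - 2*(-a-b+2*c)/3) := by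
  rw [s2, rfl3_apply γ2 γ2_ne, γ2_eq]
  simp only [inner_V3, V3_smul, V3_sub, V3_inj]
  refine ⟨by ring, by ring, by ring⟩

lemma s1_mem : s1 ∈ WeylGroup Δk :=
  Subgroup.subset_closure ⟨γ1, by simp [Δk], fun x => rfl3_apply γ1 γ1_ne x⟩
lemma s2_mem : s2 ∈ WeylGroup Δk :=
  Subgroup.subset_closure ⟨γ2, by simp [Δk], fun x => rfl3_apply γ2 γ2_ne x⟩

lemma mul_apply (w w' : E3 ≃ₗᵢ[ℝ] E3) (x : E3) : (w * w') x = w (w' x) := rfl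

lemma inner_γ1 (a b c : ℝ) : ⟪V3 a b c, γ1⟫ = a - b := by
  rw [γ1_eq, inner_V3]; ring
lemma inner_γ2 (a b c : ℝ) : ⟪V3 a b c, γ2⟫ = -a - b + 2*c := by
  rw [γ2_eq, inner_V3]; ring
lemma inner_ι3 (a b c : ℝ) : ⟪V3 a b c, ι3⟫ = a + b + c := by
  rw [ι3, inner_V3]; ring

/-- Key invariants of the Weyl group action. -/
lemma weyl_inv {w : E3 ≃ₗᵢ[ℝ] E3} (hw : w ∈ WeylGroup Δk) (x : E3) :
    (⟪w x, γ1⟫ = ⟪x, γ1⟫ ∨ ⟪w x, γ1⟫ = -⟪x, γ1⟫) ∧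
    (⟪w x, γ2⟫ = ⟪x, γ2⟫ ∨ ⟪w x, γ2⟫ = -⟪x, γ2⟫) ∧
    ⟪w x, ι3⟫ = ⟪x, ι3⟫ := by
  revert x
  refine Subgroup.closure_induction (k := {w | IsReflIn Δk w})
    (p := fun w _ => ∀ x : E3,
      (⟪w x, γ1⟫ = ⟪x, γ1⟫ ∨ ⟪w x, γ1⟫ = -⟪x, γ1⟫) ∧
      (⟪w x, γ2⟫ = ⟪x, γ2⟫ ∨ ⟪w x, γ2⟫ = -⟪x, γ2⟫) ∧
      ⟪w x, ι3⟫ = ⟪x, ι3⟫) ?_ ?_ ?_ ?_ hw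
  · rintro w ⟨α, hα, hfor⟩ x
    obtain ⟨a, b, c, rfl⟩ := coords x
    rw [Δk_eq] at hα
    simp only [Set.mem_insert_iff, Set.mem_singleton_iff] at hα
    rcases hα with rfl | rfl | rfl | rfl <;> rw [hfor (V3 a b c)] <;>
      simp only [γ1_eq, γ2_eq, ι3, inner_V3, V3_smul, V3_sub] <;>
      [refine ⟨Or.inr (by ring), Or.inl (by ring), by ring⟩;
       refine ⟨Or.inr (by ring), Or.inl (by ring), by ring⟩;
       refine ⟨Or.inl (by ring), Or.inr (by ring), by ring⟩;
       refine ⟨Or.inl (by ring), Or.inr (by ring), by ring⟩]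
  · intro x; simp
  · intro w w' _ _ hw hw' x
    rw [mul_apply]
    obtain ⟨h1, h2, h3⟩ := hw (w' x)
    obtain ⟨h1', h2', h3'⟩ := hw' x
    refine ⟨?_, ?_, by rw [h3, h3']⟩
    · rcases h1 with h | h <;> rcases h1' with h' | h' <;> rw [h, h'] <;> simp <;> tauto
    · rcases h2 with h | h <;> rcases h2' with h' | h' <;> rw [h, h'] <;> simp <;> tauto
  · intro w _ hw x
    obtain ⟨h1, h2, h3⟩ := hw (w⁻¹ x)
    have hfix : w (w⁻¹ x) = x := w.apply_symm_apply x
    rw [hfix] at h1 h2 h3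
    refine ⟨?_, ?_, h3.symm⟩
    · rcases h1 with h | h
      · exact Or.inl h.symm
      · exact Or.inr (by rw [h]; ring)
    · rcases h2 with h | h
      · exact Or.inl h.symm
      · exact Or.inr (by rw [h]; ring)

lemma reconstruct (x : E3) :
    x = (⟪x, γ1⟫/2) • γ1 + (⟪x, γ2⟫/6) • γ2 + (⟪x, ι3⟫/3) • ι3 := by
  obtain ⟨a, b, c, rfl⟩ := coords x
  rw [inner_γ1, inner_γ2, inner_ι3, γ1_eq, γ2_eq, ι3]
  norm_num [V3_inj]
  refine ⟨by ring, by ring, by ring⟩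

/-- The dominant representative of the W(k)-orbit of ξ. -/
def dvec (ξ : E3) : E3 :=
  (|⟪ξ, γ1⟫|/2) • γ1 + (|⟪ξ, γ2⟫|/6) • γ2 + (⟪ξ, ι3⟫/3) • ι3

lemma dvec_eq (ξ : E3) : dvec ξ =
    V3 (|⟪ξ, γ1⟫|/2 - |⟪ξ, γ2⟫|/6 + ⟪ξ, ι3⟫/3)
       (-|⟪ξ, γ1⟫|/2 - |⟪ξ, γ2⟫|/6 + ⟪ξ, ι3⟫/3)
       (|⟪ξ, γ2⟫|/3 + ⟪ξ, ι3⟫/3) := by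
  rw [dvec, γ1_eq, γ2_eq, ι3]
  norm_num [V3_inj]
  refine ⟨by ring, by ring, by ring⟩

lemma dvec_inner_γ1 (ξ : E3) : ⟪dvec ξ, γ1⟫ = |⟪ξ, γ1⟫| := by
  rw [dvec_eq, inner_γ1]; ring
lemma dvec_inner_γ2 (ξ : E3) : ⟪dvec ξ, γ2⟫ = |⟪ξ, γ2⟫| := by
  rw [dvec_eq, inner_γ2]; ring
lemma dvec_inner_ι (ξ : E3) : ⟪dvec ξ, ι3⟫ = ⟪ξ, ι3⟫ := by
  rw [dvec_eq, inner_ι3]; ring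

lemma dvec_dom (ξ : E3) : IsDom Δplusk (dvec ξ) := by
  intro γ hγ
  rcases hγ with rfl | rfl
  · rw [dvec_inner_γ1]; positivity
  · rw [dvec_inner_γ2]; positivity

lemma exists_w_dvec (ξ : E3) : ∃ w ∈ WeylGroup Δk, w ξ = dvec ξ := by
  obtain ⟨a, b, c, rfl⟩ := coords ξ
  rw [dvec_eq, inner_γ1, inner_γ2, inner_ι3]
  rcases le_or_gt 0 (a - b) with h1 | h1 <;> rcases le_or_gt 0 (-a - b + 2*c) with h2 | h2
  · refine ⟨1, one_mem _, ?_⟩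
    simp only [LinearIsometryEquiv.coe_one, id_eq]
    rw [abs_of_nonneg h1, abs_of_nonneg h2, V3_inj]
    refine ⟨by ring, by ring, by ring⟩
  · refine ⟨s2, s2_mem, ?_⟩
    rw [s2_apply, abs_of_nonneg h1, abs_of_nonpos h2.le, V3_inj]
    refine ⟨by ring, by ring, by ring⟩
  · refine ⟨s1, s1_mem, ?_⟩
    rw [s1_apply, abs_of_nonpos h1.le, abs_of_nonneg h2, V3_inj]
    refine ⟨by ring, by ring, by ring⟩
  · refine ⟨s1 * s2, mul_mem s1_mem s2_mem, ?_⟩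
    rw [mul_apply, s2_apply, s1_apply, abs_of_nonpos h1.le, abs_of_nonpos h2.le, V3_inj]
    refine ⟨by ring, by ring, by ring⟩

lemma dom_orbit_eq {w : E3 ≃ₗᵢ[ℝ] E3} {ξ d : E3} (hw : w ∈ WeylGroup Δk)
    (heq : w ξ = d) (hd : IsDom Δplusk d) : d = dvec ξ := by
  obtain ⟨h1, h2, h3⟩ := weyl_inv hw ξ
  rw [heq] at h1 h2 h3
  have hd1 : 0 ≤ ⟪d, γ1⟫ := hd γ1 (Or.inl rfl)
  have hd2 : 0 ≤ ⟪d, γ2⟫ := hd γ2 (Or.inr rfl)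
  have e1 : ⟪d, γ1⟫ = |⟪ξ, γ1⟫| := by
    rcases h1 with h | h
    · rw [h, abs_of_nonneg (h ▸ hd1)]
    · rw [h]
      rw [abs_of_nonpos (by linarith [h ▸ hd1] : ⟪ξ, γ1⟫ ≤ 0)]
  have e2 : ⟪d, γ2⟫ = |⟪ξ, γ2⟫| := by
    rcases h2 with h | h
    · rw [h, abs_of_nonneg (h ▸ hd2)]
    · rw [h]
      rw [abs_of_nonpos (by linarith [h ▸ hd2] : ⟪ξ, γ2⟫ ≤ 0)]
  calc d = (⟪d, γ1⟫/2) • γ1 + (⟪d, γ2⟫/6) • γ2 + (⟪d, ι3⟫/3) • ι3 := reconstruct d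
    _ = dvec ξ := by rw [e1, e2, h3, dvec]

/-! ### Positive systems compatible with Δplusk -/

lemma Δplusk_eq : Δplusk = {V3 1 (-1) 0, V3 (-1) (-1) 2} := by
  rw [Δplusk, γ1_eq, γ2_eq]

lemma mem_Δp_iff {x : E3} : x ∈ Δp ↔
    x = V3 1 0 (-1) ∨ x = V3 (-1) 0 1 ∨ x = V3 0 1 (-1) ∨ x = V3 0 (-1) 1 ∨
    x = V3 2 (-1) (-1) ∨ x = V3 (-2) 1 1 ∨ x = V3 (-1) 2 (-1) ∨ x = V3 1 (-2) 1 := by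
  rw [Δp, Set.mem_diff, mem_ΔG2_iff, Δk_eq]
  constructor
  · rintro ⟨h12, hk⟩
    simp only [Set.mem_insert_iff, Set.mem_singleton_iff] at hk
    push_neg at hk
    tauto
  · rintro (rfl|rfl|rfl|rfl|rfl|rfl|rfl|rfl) <;>
      exact ⟨by norm_num [V3_inj], by norm_num [V3_inj]⟩

lemma P1_subset : P1 ⊆ Δp := by
  intro x hx
  rw [mem_Δp_iff]
  rcases hx with rfl|rfl|rfl|rfl <;> norm_num [V3_inj]
lemma P2_subset : P2 ⊆ Δp := by
  intro x hx
  rw [mem_Δp_iff]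
  rcases hx with rfl|rfl|rfl|rfl <;> norm_num [V3_inj]
lemma P3_subset : P3 ⊆ Δp := by
  intro x hx
  rw [mem_Δp_iff]
  rcases hx with rfl|rfl|rfl|rfl <;> norm_num [V3_inj]

lemma isPos1 : IsPosSystem ΔG2 (Δplusk ∪ P1) := by
  refine ⟨V3 2 (-3) 1, by rw [InV_V3]; norm_num, ?_, ?_⟩
  · intro α hα
    rw [mem_ΔG2_iff] at hα
    rcases hα with rfl|rfl|rfl|rfl|rfl|rfl|rfl|rfl|rfl|rfl|rfl|rfl <;>
      rw [inner_V3] <;> norm_num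
  · ext x
    simp only [Set.mem_union, Δplusk_eq, P1, Set.mem_insert_iff, Set.mem_singleton_iff,
      Set.mem_setOf_eq, mem_ΔG2_iff]
    constructor
    · rintro ((rfl|rfl)|(rfl|rfl|rfl|rfl)) <;>
        exact ⟨by norm_num [V3_inj], by rw [inner_V3]; norm_num⟩
    · rintro ⟨(rfl|rfl|rfl|rfl|rfl|rfl|rfl|rfl|rfl|rfl|rfl|rfl), hpos⟩ <;>
        rw [inner_V3] at hpos <;> (revert hpos; norm_num) <;> norm_num [V3_inj]
lemma isPos2 : IsPosSystem ΔG2 (Δplusk ∪ P2) := by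
  refine ⟨V3 1 (-3) 2, by rw [InV_V3]; norm_num, ?_, ?_⟩
  · intro α hα
    rw [mem_ΔG2_iff] at hα
    rcases hα with rfl|rfl|rfl|rfl|rfl|rfl|rfl|rfl|rfl|rfl|rfl|rfl <;>
      rw [inner_V3] <;> norm_num
  · ext x
    simp only [Set.mem_union, Δplusk_eq, P2, Set.mem_insert_iff, Set.mem_singleton_iff,
      Set.mem_setOf_eq, mem_ΔG2_iff]
    constructor
    · rintro ((rfl|rfl)|(rfl|rfl|rfl|rfl)) <;>
        exact ⟨by norm_num [V3_inj], by rw [inner_V3]; norm_num⟩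
    · rintro ⟨(rfl|rfl|rfl|rfl|rfl|rfl|rfl|rfl|rfl|rfl|rfl|rfl), hpos⟩ <;>
        rw [inner_V3] at hpos <;> (revert hpos; norm_num) <;> norm_num [V3_inj]
lemma isPos3 : IsPosSystem ΔG2 (Δplusk ∪ P3) := by
  refine ⟨V3 (-1) (-2) 3, by rw [InV_V3]; norm_num, ?_, ?_⟩
  · intro α hα
    rw [mem_ΔG2_iff] at hα
    rcases hα with rfl|rfl|rfl|rfl|rfl|rfl|rfl|rfl|rfl|rfl|rfl|rfl <;>
      rw [inner_V3] <;> norm_num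
  · ext x
    simp only [Set.mem_union, Δplusk_eq, P3, Set.mem_insert_iff, Set.mem_singleton_iff,
      Set.mem_setOf_eq, mem_ΔG2_iff]
    constructor
    · rintro ((rfl|rfl)|(rfl|rfl|rfl|rfl)) <;>
        exact ⟨by norm_num [V3_inj], by rw [inner_V3]; norm_num⟩
    · rintro ⟨(rfl|rfl|rfl|rfl|rfl|rfl|rfl|rfl|rfl|rfl|rfl|rfl), hpos⟩ <;>
        rw [inner_V3] at hpos <;> (revert hpos; norm_num) <;> norm_num [V3_inj]

lemma pos_classify {P : Set E3} (hP : P ⊆ Δp)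
    (hp : IsPosSystem ΔG2 (Δplusk ∪ P)) : P = P1 ∨ P = P2 ∨ P = P3 := by
  obtain ⟨v, hv, hnz, hset⟩ := hp
  obtain ⟨a, b, c, rfl⟩ := coords v
  rw [InV_V3] at hv
  have hchar : P = {α ∈ Δp | 0 < ⟪α, V3 a b c⟫} := by
    ext x
    constructor
    · intro hx
      refine ⟨hP hx, ?_⟩
      have : x ∈ Δplusk ∪ P := Or.inr hx
      rw [hset] at this
      exact this.2
    · rintro ⟨hxp, hxpos⟩
      have hxG : x ∈ ΔG2 := by
        rw [Δp, Set.mem_diff] at hxp; exact hxp.1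
      have : x ∈ Δplusk ∪ P := by rw [hset]; exact ⟨hxG, hxpos⟩
      rcases this with h | h
      · exfalso
        rw [Δp, Set.mem_diff] at hxp
        apply hxp.2
        rw [Δk_eq]
        rw [Δplusk_eq] at h
        rcases h with rfl | rfl <;> norm_num [V3_inj]
      · exact h
  have hγ1 : 0 < a - b := by
    have : γ1 ∈ Δplusk ∪ P := Or.inl (Or.inl rfl)
    rw [hset] at this
    have h := this.2
    rw [γ1_eq, inner_V3] at h
    linarith
  have hγ2 : 0 < -a - b + 2*c := by
    have : γ2 ∈ Δplusk ∪ P := Or.inl (Or.inr rfl)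
    rw [hset] at this
    have h := this.2
    rw [γ2_eq, inner_V3] at h
    linarith
  have hac : a - c ≠ 0 := by
    have := hnz (V3 1 0 (-1)) (by rw [mem_ΔG2_iff]; norm_num [V3_inj])
    rw [inner_V3] at this
    intro h; apply this; linarith
  have ha : a ≠ 0 := by
    have := hnz (V3 2 (-1) (-1)) (by rw [mem_ΔG2_iff]; norm_num [V3_inj])
    rw [inner_V3] at this
    intro h; apply this; linarith
  rcases lt_or_gt_of_ne ha with ha' | ha'
  · -- a < 0 : P = P3
    refine Or.inr (Or.inr ?_)
    rw [hchar]
    ext x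
    simp only [Set.mem_setOf_eq, mem_Δp_iff, P3, Set.mem_insert_iff, Set.mem_singleton_iff]
    constructor
    · rintro ⟨(rfl|rfl|rfl|rfl|rfl|rfl|rfl|rfl), hpos⟩ <;> rw [inner_V3] at hpos <;>
        first
          | (exfalso; linarith)
          | norm_num [V3_inj]
    · rintro (rfl|rfl|rfl|rfl) <;>
        exact ⟨by norm_num [V3_inj], by rw [inner_V3]; linarith⟩
  · rcases lt_or_gt_of_ne hac with hac' | hac'
    · -- 0 < a, a < c : P = P2
      refine Or.inr (Or.inl ?_)
      rw [hchar]
      ext x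
      simp only [Set.mem_setOf_eq, mem_Δp_iff, P2, Set.mem_insert_iff, Set.mem_singleton_iff]
      constructor
      · rintro ⟨(rfl|rfl|rfl|rfl|rfl|rfl|rfl|rfl), hpos⟩ <;> rw [inner_V3] at hpos <;>
          first
            | (exfalso; linarith)
            | norm_num [V3_inj]
      · rintro (rfl|rfl|rfl|rfl) <;>
          exact ⟨by norm_num [V3_inj], by rw [inner_V3]; linarith⟩
    · -- 0 < a, c < a : P = P1
      refine Or.inl ?_
      rw [hchar]
      ext x
      simp only [Set.mem_setOf_eq, mem_Δp_iff, P1, Set.mem_insert_iff, Set.mem_singleton_iff]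
      constructor
      · rintro ⟨(rfl|rfl|rfl|rfl|rfl|rfl|rfl|rfl), hpos⟩ <;> rw [inner_V3] at hpos <;>
          first
            | (exfalso; linarith)
            | norm_num [V3_inj]
      · rintro (rfl|rfl|rfl|rfl) <;>
          exact ⟨by norm_num [V3_inj], by rw [inner_V3]; linarith⟩

/-! ### Evaluation of the spin norm -/

lemma sInf_triple (a b c : ℝ) : sInf {a, b, c} = min a (min b c) := by
  have hfin : ({b, c} : Set ℝ).Finite := (Set.finite_singleton c).insert b
  rw [csInf_insert hfin.bddBelow ⟨b, by simp⟩,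
    csInf_insert (Set.finite_singleton c).bddBelow ⟨c, rfl⟩, csInf_singleton]

lemma spinNorm_eq_min (m₁ m₂ : ℕ) :
    spinNorm (mu m₁ m₂) =
      min ‖dvec (mu m₁ m₂ - V3 2 (-2) 0) + ρc‖
        (min ‖dvec (mu m₁ m₂ - V3 1 (-2) 1) + ρc‖
             ‖dvec (mu m₁ m₂ - V3 (-1) (-1) 2) + ρc‖) := by
  rw [spinNorm]
  rw [show {r | ∃ P ⊆ Δp, IsPosSystem ΔG2 (Δplusk ∪ P) ∧
      ∃ d : E3, IsDom Δplusk d ∧ (∃ w ∈ WeylGroup Δk, w (mu m₁ m₂ - halfSum P) = d) ∧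
        r = ‖d + ρc‖} =
    {‖dvec (mu m₁ m₂ - V3 2 (-2) 0) + ρc‖, ‖dvec (mu m₁ m₂ - V3 1 (-2) 1) + ρc‖,
     ‖dvec (mu m₁ m₂ - V3 (-1) (-1) 2) + ρc‖} from ?_, sInf_triple]
  ext r
  simp only [Set.mem_setOf_eq, Set.mem_insert_iff, Set.mem_singleton_iff]
  constructor
  · rintro ⟨P, hPsub, hpos, d, hdom, ⟨w, hw, hwd⟩, rfl⟩
    rcases pos_classify hPsub hpos with rfl | rfl | rfl
    · rw [halfSum_P1] at hwd
      rw [dom_orbit_eq hw hwd hdom]; tauto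
    · rw [halfSum_P2] at hwd
      rw [dom_orbit_eq hw hwd hdom]; tauto
    · rw [halfSum_P3] at hwd
      rw [dom_orbit_eq hw hwd hdom]; tauto
  · rintro (rfl | rfl | rfl)
    · exact ⟨P1, P1_subset, isPos1, dvec (mu m₁ m₂ - V3 2 (-2) 0), dvec_dom _,
        by rw [halfSum_P1]; exact exists_w_dvec _, rfl⟩
    · exact ⟨P2, P2_subset, isPos2, dvec (mu m₁ m₂ - V3 1 (-2) 1), dvec_dom _,
        by rw [halfSum_P2]; exact exists_w_dvec _, rfl⟩
    · exact ⟨P3, P3_subset, isPos3, dvec (mu m₁ m₂ - V3 (-1) (-1) 2), dvec_dom _,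
        by rw [halfSum_P3]; exact exists_w_dvec _, rfl⟩

lemma sq_dvec_ρc (ξ : E3) : ⟪dvec ξ + ρc, dvec ξ + ρc⟫ =
    (|⟪ξ, γ1⟫|+1)^2/2 + (|⟪ξ, γ2⟫|+3)^2/6 + ⟪ξ, ι3⟫^2/3 := by
  rw [dvec_eq, ρc_eq, V3_add, inner_V3]
  ring

lemma xi1_γ1 (m₁ m₂ : ℕ) : ⟪mu m₁ m₂ - V3 2 (-2) 0, γ1⟫ = (m₁ : ℝ) - 4 := by
  rw [mu_eq, V3_sub, inner_γ1]; ring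
lemma xi1_γ2 (m₁ m₂ : ℕ) : ⟪mu m₁ m₂ - V3 2 (-2) 0, γ2⟫ = 3*(m₂ : ℝ) := by
  rw [mu_eq, V3_sub, inner_γ2]; ring
lemma xi1_ι (m₁ m₂ : ℕ) : ⟪mu m₁ m₂ - V3 2 (-2) 0, ι3⟫ = 0 := by
  rw [mu_eq, V3_sub, inner_ι3]; ring
lemma xi2_γ1 (m₁ m₂ : ℕ) : ⟪mu m₁ m₂ - V3 1 (-2) 1, γ1⟫ = (m₁ : ℝ) - 3 := by
  rw [mu_eq, V3_sub, inner_γ1]; ring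
lemma xi2_γ2 (m₁ m₂ : ℕ) : ⟪mu m₁ m₂ - V3 1 (-2) 1, γ2⟫ = 3*(m₂ : ℝ) - 3 := by
  rw [mu_eq, V3_sub, inner_γ2]; ring
lemma xi2_ι (m₁ m₂ : ℕ) : ⟪mu m₁ m₂ - V3 1 (-2) 1, ι3⟫ = 0 := by
  rw [mu_eq, V3_sub, inner_ι3]; ring
lemma xi3_γ1 (m₁ m₂ : ℕ) : ⟪mu m₁ m₂ - V3 (-1) (-1) 2, γ1⟫ = (m₁ : ℝ) := by
  rw [mu_eq, V3_sub, inner_γ1]; ring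
lemma xi3_γ2 (m₁ m₂ : ℕ) : ⟪mu m₁ m₂ - V3 (-1) (-1) 2, γ2⟫ = 3*(m₂ : ℝ) - 6 := by
  rw [mu_eq, V3_sub, inner_γ2]; ring
lemma xi3_ι (m₁ m₂ : ℕ) : ⟪mu m₁ m₂ - V3 (-1) (-1) 2, ι3⟫ = 0 := by
  rw [mu_eq, V3_sub, inner_ι3]; ring

lemma sq_B1 (m₁ m₂ : ℕ) : ⟪dvec (mu m₁ m₂ - V3 2 (-2) 0) + ρc,
    dvec (mu m₁ m₂ - V3 2 (-2) 0) + ρc⟫ =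
    (|(m₁ : ℝ) - 4|+1)^2/2 + (3*(m₂ : ℝ)+3)^2/6 := by
  rw [sq_dvec_ρc, xi1_γ1, xi1_γ2, xi1_ι, abs_of_nonneg (by positivity : (0:ℝ) ≤ 3*(m₂:ℝ))]
  ring
lemma sq_B2 (m₁ m₂ : ℕ) : ⟪dvec (mu m₁ m₂ - V3 1 (-2) 1) + ρc,
    dvec (mu m₁ m₂ - V3 1 (-2) 1) + ρc⟫ =
    (|(m₁ : ℝ) - 3|+1)^2/2 + (|3*(m₂ : ℝ) - 3|+3)^2/6 := by
  rw [sq_dvec_ρc, xi2_γ1, xi2_γ2, xi2_ι]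
  ring
lemma sq_B3 (m₁ m₂ : ℕ) : ⟪dvec (mu m₁ m₂ - V3 (-1) (-1) 2) + ρc,
    dvec (mu m₁ m₂ - V3 (-1) (-1) 2) + ρc⟫ =
    ((m₁ : ℝ)+1)^2/2 + (|3*(m₂ : ℝ) - 6|+3)^2/6 := by
  rw [sq_dvec_ρc, xi3_γ1, xi3_γ2, xi3_ι, abs_of_nonneg (by positivity : (0:ℝ) ≤ (m₁:ℝ))]
  ring

/-! ### Projection onto convex sets: uniqueness and minimality -/

lemma proj_min {x la₀ : E3} {K : E3 → Prop}
    (hVI : ∀ v, K v → ⟪x - la₀, v - la₀⟫ ≤ 0) :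
    ∀ v, K v → ‖x - la₀‖ ≤ ‖x - v‖ := by
  intro v hv
  rw [norm_le_iff_inner]
  have hexp : x - v = (x - la₀) - (v - la₀) := by abel
  have hh := real_inner_sub_sub_self (x - la₀) (v - la₀)
  rw [← hexp] at hh
  have hc := real_inner_comm (x - la₀) (v - la₀)
  have h1 := hVI v hv
  have h2 : (0:ℝ) ≤ ⟪v - la₀, v - la₀⟫ := real_inner_self_nonneg
  linarith

lemma proj_unique {x la₀ la : E3} {K : E3 → Prop} (h₀K : K la₀)
    (hVI : ∀ v, K v → ⟪x - la₀, v - la₀⟫ ≤ 0) (hK : K la)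
    (hmin : ∀ v, K v → ‖x - la‖ ≤ ‖x - v‖) : la = la₀ := by
  have h1 : ‖x - la‖ ≤ ‖x - la₀‖ := hmin la₀ h₀K
  rw [norm_le_iff_inner] at h1
  have hexp : x - la = (x - la₀) - (la - la₀) := by abel
  have hh := real_inner_sub_sub_self (x - la₀) (la - la₀)
  rw [← hexp] at hh
  have hc := real_inner_comm (x - la₀) (la - la₀)
  have h2 := hVI la hK
  have h3 : (0:ℝ) ≤ ⟪la - la₀, la - la₀⟫ := real_inner_self_nonneg
  have h4 : ⟪la - la₀, la - la₀⟫ = 0 := by linarith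
  have := inner_self_eq_zero.mp h4
  have : la - la₀ = 0 := this
  linear_combination (norm := abel) this

/-! ### μ + 2ρc and the three candidate positive systems -/

lemma mu2ρc_eq (m₁ m₂ : ℕ) : mu m₁ m₂ + (2:ℝ) • ρc =
    V3 ((m₁ - m₂)/2) (-(m₁ + m₂)/2 - 2) ((m₂ : ℝ) + 2) := by
  rw [mu_eq, ρc_eq, V3_smul, V3_add, V3_inj]
  refine ⟨by ring, by ring, by ring⟩

lemma lambda_D_classify {m₁ m₂ : ℕ} {D : Set E3} (hD : IsPosSystem ΔG2 D)
    (hdom : ∀ α ∈ D, 0 ≤ ⟪mu m₁ m₂ + (2:ℝ) • ρc, α⟫) :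
    D = Δplusk ∪ P1 ∨ D = Δplusk ∪ P2 ∨ D = Δplusk ∪ P3 := by
  obtain ⟨v, hvV, hnz, hset⟩ := hD
  -- γ1 ∈ D
  have hγ1 : γ1 ∈ D := by
    by_contra h
    have hne := hnz γ1 (by rw [mem_ΔG2_iff, γ1_eq]; norm_num [V3_inj])
    have hneg : ⟪γ1, v⟫ < 0 := by
      rcases lt_or_gt_of_ne hne with h' | h'
      · exact h'
      · exfalso
        exact h (by
          rw [hset]
          exact ⟨by rw [mem_ΔG2_iff, γ1_eq]; norm_num [V3_inj], h'⟩)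
    have hmem : -γ1 ∈ D := by
      rw [hset]
      refine ⟨by rw [mem_ΔG2_iff, γ1_eq]; norm_num [V3_inj], ?_⟩
      rw [inner_neg_left]; linarith
    have := hdom (-γ1) hmem
    rw [mu2ρc_eq, γ1_eq] at this
    rw [V3_neg, inner_V3] at this
    have c1 : (0:ℝ) ≤ m₁ := Nat.cast_nonneg m₁
    have c2 : (0:ℝ) ≤ m₂ := Nat.cast_nonneg m₂
    nlinarith [this]
  have hγ2 : γ2 ∈ D := by
    by_contra h
    have hne := hnz γ2 (by rw [mem_ΔG2_iff, γ2_eq]; norm_num [V3_inj])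
    have hneg : ⟪γ2, v⟫ < 0 := by
      rcases lt_or_gt_of_ne hne with h' | h'
      · exact h'
      · exfalso
        exact h (by
          rw [hset]
          exact ⟨by rw [mem_ΔG2_iff, γ2_eq]; norm_num [V3_inj], h'⟩)
    have hmem : -γ2 ∈ D := by
      rw [hset]
      refine ⟨by rw [mem_ΔG2_iff, γ2_eq]; norm_num [V3_inj], ?_⟩
      rw [inner_neg_left]; linarith
    have := hdom (-γ2) hmem
    rw [mu2ρc_eq, γ2_eq] at this
    rw [V3_neg, inner_V3] at this
    have c1 : (0:ℝ) ≤ m₁ := Nat.cast_nonneg m₁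
    have c2 : (0:ℝ) ≤ m₂ := Nat.cast_nonneg m₂
    nlinarith [this]
  -- D = Δplusk ∪ (D ∩ Δp)
  have hsplit : D = Δplusk ∪ (D ∩ Δp) := by
    ext x
    constructor
    · intro hx
      have hxG : x ∈ ΔG2 := by rw [hset] at hx; exact hx.1
      by_cases hk : x ∈ Δk
      · left
        rw [Δk_eq] at hk
        simp only [Set.mem_insert_iff, Set.mem_singleton_iff] at hk
        have hpos : 0 < ⟪x, v⟫ := by rw [hset] at hx; exact hx.2
        have hγ1pos : 0 < ⟪γ1, v⟫ := by rw [hset] at hγ1; exact hγ1.2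
        have hγ2pos : 0 < ⟪γ2, v⟫ := by rw [hset] at hγ2; exact hγ2.2
        rcases hk with rfl | rfl | rfl | rfl
        · exact Or.inl (γ1_eq.symm)
        · exfalso
          rw [show V3 (-1) 1 0 = -γ1 by rw [γ1_eq]; norm_num [V3_inj], inner_neg_left] at hpos
          linarith
        · exact Or.inr (γ2_eq.symm)
        · exfalso
          rw [show V3 1 1 (-2) = -γ2 by rw [γ2_eq]; norm_num [V3_inj], inner_neg_left] at hpos
          linarith
      · exact Or.inr ⟨hx, by rw [Δp, Set.mem_diff]; exact ⟨hxG, hk⟩⟩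
    · rintro (hx | hx)
      · rcases hx with rfl | rfl
        · exact hγ1
        · exact hγ2
      · exact hx.1
  have hPsub : D ∩ Δp ⊆ Δp := Set.inter_subset_right
  have hpos' : IsPosSystem ΔG2 (Δplusk ∪ (D ∩ Δp)) := ⟨v, hvV, hnz, by rw [← hsplit]; exact hset⟩
  rcases pos_classify hPsub hpos' with h | h | h
  · exact Or.inl (by rw [hsplit, h])
  · exact Or.inr (Or.inl (by rw [hsplit, h]))
  · exact Or.inr (Or.inr (by rw [hsplit, h]))

/-! ### Half sums of the three full positive systems -/

lemma union_two_four (a b c d f g : E3) :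
    ({a, b} : Set E3) ∪ {c, d, f, g} = {a, b, c, d, f, g} := by
  rw [Set.insert_union, Set.singleton_union]

lemma halfSum_D1 : halfSum (Δplusk ∪ P1) = V3 2 (-3) 1 := by
  rw [Δplusk_eq, P1, union_two_four, halfSum, finsum_six] <;>
    first
      | (norm_num [V3_inj]; done)
      | (simp only [V3_add, V3_smul, V3_inj]; norm_num)
lemma halfSum_D2 : halfSum (Δplusk ∪ P2) = V3 1 (-3) 2 := by
  rw [Δplusk_eq, P2, union_two_four, halfSum, finsum_six] <;>
    first
      | (norm_num [V3_inj]; done)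
      | (simp only [V3_add, V3_smul, V3_inj]; norm_num)
lemma halfSum_D3 : halfSum (Δplusk ∪ P3) = V3 (-1) (-2) 3 := by
  rw [Δplusk_eq, P3, union_two_four, halfSum, finsum_six] <;>
    first
      | (norm_num [V3_inj]; done)
      | (simp only [V3_add, V3_smul, V3_inj]; norm_num)

/-! ### The lambda norm in the interior region m₂+2 ≤ m₁ ≤ 3m₂+2 -/

lemma lambda_reg4 (m₁ m₂ : ℕ) (h1 : m₂ + 2 ≤ m₁) (h2 : m₁ ≤ 3*m₂ + 2) :
    lambdaNorm (mu m₁ m₂) =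
      ‖V3 (((m₁:ℝ) - (m₂:ℝ))/2 - 1) (-((m₁:ℝ) + (m₂:ℝ))/2 + 1) (m₂:ℝ)‖ := by
  have c1 : (m₂:ℝ) + 2 ≤ (m₁:ℝ) := by exact_mod_cast h1
  have c2 : (m₁:ℝ) ≤ 3*(m₂:ℝ) + 2 := by exact_mod_cast h2
  set la₀ : E3 := V3 (((m₁:ℝ) - (m₂:ℝ))/2 - 1) (-((m₁:ℝ) + (m₂:ℝ))/2 + 1) (m₂:ℝ) with hla₀
  have hx2 : mu m₁ m₂ + (2:ℝ) • ρc - halfSum (Δplusk ∪ P2) = la₀ := by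
    rw [mu2ρc_eq, halfSum_D2, hla₀, V3_sub, V3_inj]
    refine ⟨by ring, by ring, by ring⟩
  have hlaV : InV la₀ := by rw [hla₀, InV_V3]; ring
  have hlaDom : ∀ α ∈ Δplusk ∪ P2, 0 ≤ ⟪la₀, α⟫ := by
    rintro α (hα | hα)
    · rw [Δplusk_eq] at hα
      rcases hα with rfl | rfl <;> rw [hla₀, inner_V3] <;> linarith
    · rw [P2] at hα
      simp only [Set.mem_insert_iff, Set.mem_singleton_iff] at hα
      rcases hα with rfl | rfl | rfl | rfl <;> rw [hla₀, inner_V3] <;> linarith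
  have hdom2 : ∀ α ∈ Δplusk ∪ P2, 0 ≤ ⟪mu m₁ m₂ + (2:ℝ) • ρc, α⟫ := by
    rintro α (hα | hα)
    · rw [Δplusk_eq] at hα
      rcases hα with rfl | rfl <;> rw [mu2ρc_eq, inner_V3] <;> linarith
    · rw [P2] at hα
      simp only [Set.mem_insert_iff, Set.mem_singleton_iff] at hα
      rcases hα with rfl | rfl | rfl | rfl <;> rw [mu2ρc_eq, inner_V3] <;> linarith
  have hVI : ∀ v : E3, (InV v ∧ ∀ α ∈ Δplusk ∪ P2, 0 ≤ ⟪v, α⟫) →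
      ⟪mu m₁ m₂ + (2:ℝ) • ρc - halfSum (Δplusk ∪ P2) - la₀, v - la₀⟫ ≤ 0 := by
    intro v _
    rw [hx2, sub_self, inner_zero_left]
  rw [lambdaNorm]
  rw [show {r | ∃ D : Set E3, IsPosSystem ΔG2 D ∧
      (∀ α ∈ D, 0 ≤ ⟪mu m₁ m₂ + (2 : ℝ) • ρc, α⟫) ∧
      ∃ la : E3, InV la ∧ (∀ α ∈ D, 0 ≤ ⟪la, α⟫) ∧
        (∀ v : E3, InV v → (∀ α ∈ D, 0 ≤ ⟪v, α⟫) →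
          ‖mu m₁ m₂ + (2 : ℝ) • ρc - halfSum D - la‖ ≤
            ‖mu m₁ m₂ + (2 : ℝ) • ρc - halfSum D - v‖) ∧
        r = ‖la‖} = {‖la₀‖} from ?_, csInf_singleton]
  ext r
  simp only [Set.mem_setOf_eq, Set.mem_singleton_iff]
  constructor
  · rintro ⟨D, hD, hdom, la, hlaV', hlaDom', hmin, rfl⟩
    rcases lambda_D_classify hD hdom with rfl | rfl | rfl
    · -- D1 impossible
      exfalso
      have := hdom (V3 1 0 (-1)) (Or.inr (by rw [P1]; norm_num [V3_inj]))
      rw [mu2ρc_eq, inner_V3] at this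
      linarith
    · -- D2 : unique projection
      have : la = la₀ := by
        refine proj_unique (K := fun v => InV v ∧ ∀ α ∈ Δplusk ∪ P2, 0 ≤ ⟪v, α⟫)
          ⟨hlaV, hlaDom⟩ hVI ⟨hlaV', hlaDom'⟩ (fun v hv => hmin v hv.1 hv.2)
      rw [this]
    · -- D3 impossible
      exfalso
      have := hdom (V3 (-2) 1 1) (Or.inr (by rw [P3]; norm_num [V3_inj]))
      rw [mu2ρc_eq, inner_V3] at this
      linarith
  · rintro rfl
    exact ⟨Δplusk ∪ P2, isPos2, hdom2, la₀, hlaV, hlaDom,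
      fun v hv1 hv2 => proj_min hVI v ⟨hv1, hv2⟩, rfl⟩

/-! ### The lambda norm in the remaining regions -/

lemma lambda_reg1 (m₁ m₂ : ℕ) (h : m₁ + 2 ≤ m₂) :
    lambdaNorm (mu m₁ m₂) = ‖V3 (((m₁:ℝ) - (m₂:ℝ))/2 + 1) (-((m₁:ℝ) + (m₂:ℝ))/2) ((m₂:ℝ) - 1)‖ := by
  have c1 : (m₁:ℝ) + 2 ≤ (m₂:ℝ) := by exact_mod_cast h
  set la₀ : E3 := V3 (((m₁:ℝ) - (m₂:ℝ))/2 + 1) (-((m₁:ℝ) + (m₂:ℝ))/2) ((m₂:ℝ) - 1) with hla₀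
  have hlaV : InV la₀ := by rw [hla₀, InV_V3]; push_cast; linarith
  have hx3 : mu m₁ m₂ + (2:ℝ) • ρc - halfSum (Δplusk ∪ P3) - la₀ = V3 0 0 0 := by
    rw [mu2ρc_eq, halfSum_D3, hla₀, V3_sub, V3_sub, V3_inj]
    refine ⟨by push_cast; linarith, by push_cast; linarith, by push_cast; linarith⟩
  have hlaDom3 : ∀ α ∈ Δplusk ∪ P3, 0 ≤ ⟪la₀, α⟫ := by
    rintro α (hα | hα)
    · rw [Δplusk_eq] at hα
      rcases hα with rfl | rfl <;> rw [hla₀, inner_V3] <;> linarith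
    · rw [P3] at hα
      simp only [Set.mem_insert_iff, Set.mem_singleton_iff] at hα
      rcases hα with rfl | rfl | rfl | rfl <;> rw [hla₀, inner_V3] <;> linarith
  have hdom3 : ∀ α ∈ Δplusk ∪ P3, 0 ≤ ⟪mu m₁ m₂ + (2:ℝ) • ρc, α⟫ := by
    rintro α (hα | hα)
    · rw [Δplusk_eq] at hα
      rcases hα with rfl | rfl <;> rw [mu2ρc_eq, inner_V3] <;> push_cast <;> linarith
    · rw [P3] at hα
      simp only [Set.mem_insert_iff, Set.mem_singleton_iff] at hα
      rcases hα with rfl | rfl | rfl | rfl <;> rw [mu2ρc_eq, inner_V3] <;> push_cast <;> linarith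
  have hVI3 : ∀ v : E3, (InV v ∧ ∀ α ∈ Δplusk ∪ P3, 0 ≤ ⟪v, α⟫) →
      ⟪mu m₁ m₂ + (2:ℝ) • ρc - halfSum (Δplusk ∪ P3) - la₀, v - la₀⟫ ≤ 0 := by
    rintro v ⟨hv1, hv2⟩
    obtain ⟨a, b, c, rfl⟩ := coords v
    have hr := hv2 (V3 1 (-1) 0) (Or.inl (by rw [Δplusk_eq]; norm_num [V3_inj]))
    rw [inner_V3] at hr
    rw [hx3, hla₀, V3_sub, inner_V3]
    linarith
  rw [lambdaNorm]
  rw [show {r | ∃ D : Set E3, IsPosSystem ΔG2 D ∧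
      (∀ α ∈ D, 0 ≤ ⟪mu m₁ m₂ + (2 : ℝ) • ρc, α⟫) ∧
      ∃ la : E3, InV la ∧ (∀ α ∈ D, 0 ≤ ⟪la, α⟫) ∧
        (∀ v : E3, InV v → (∀ α ∈ D, 0 ≤ ⟪v, α⟫) →
          ‖mu m₁ m₂ + (2 : ℝ) • ρc - halfSum D - la‖ ≤
            ‖mu m₁ m₂ + (2 : ℝ) • ρc - halfSum D - v‖) ∧
        r = ‖la‖} = {‖la₀‖} from ?_, csInf_singleton]
  ext r
  simp only [Set.mem_setOf_eq, Set.mem_singleton_iff]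
  constructor
  · rintro ⟨D, hD, hdom, la, hlaV', hlaDom', hmin, rfl⟩
    rcases lambda_D_classify hD hdom with rfl | rfl | rfl
    · exfalso
      have := hdom (V3 1 0 (-1)) (Or.inr (by rw [P1]; norm_num [V3_inj]))
      rw [mu2ρc_eq, inner_V3] at this
      push_cast at this
      linarith
    · exfalso
      have := hdom (V3 2 (-1) (-1)) (Or.inr (by rw [P2]; norm_num [V3_inj]))
      rw [mu2ρc_eq, inner_V3] at this
      push_cast at this
      linarith
    · have : la = la₀ := by
        refine proj_unique (K := fun v => InV v ∧ ∀ α ∈ Δplusk ∪ P3, 0 ≤ ⟪v, α⟫)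
          ⟨hlaV, hlaDom3⟩ hVI3 ⟨hlaV', hlaDom'⟩ (fun v hv => hmin v hv.1 hv.2)
      rw [this]
  · rintro rfl
    exact ⟨Δplusk ∪ P3, isPos3, hdom3, la₀, hlaV, hlaDom3,
      fun v hv1 hv2 => proj_min hVI3 v ⟨hv1, hv2⟩, rfl⟩

lemma lambda_reg6 (m₁ m₂ : ℕ) (h : 3*m₂ + 6 ≤ m₁) :
    lambdaNorm (mu m₁ m₂) = ‖V3 (((m₁:ℝ) - (m₂:ℝ))/2 - 2) (-((m₁:ℝ) + (m₂:ℝ))/2 + 1) ((m₂:ℝ) + 1)‖ := by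
  have c1 : 3*(m₂:ℝ) + 6 ≤ (m₁:ℝ) := by exact_mod_cast h
  set la₀ : E3 := V3 (((m₁:ℝ) - (m₂:ℝ))/2 - 2) (-((m₁:ℝ) + (m₂:ℝ))/2 + 1) ((m₂:ℝ) + 1) with hla₀
  have hlaV : InV la₀ := by rw [hla₀, InV_V3]; push_cast; linarith
  have hx1 : mu m₁ m₂ + (2:ℝ) • ρc - halfSum (Δplusk ∪ P1) - la₀ = V3 0 0 0 := by
    rw [mu2ρc_eq, halfSum_D1, hla₀, V3_sub, V3_sub, V3_inj]
    refine ⟨by push_cast; linarith, by push_cast; linarith, by push_cast; linarith⟩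
  have hlaDom1 : ∀ α ∈ Δplusk ∪ P1, 0 ≤ ⟪la₀, α⟫ := by
    rintro α (hα | hα)
    · rw [Δplusk_eq] at hα
      rcases hα with rfl | rfl <;> rw [hla₀, inner_V3] <;> linarith
    · rw [P1] at hα
      simp only [Set.mem_insert_iff, Set.mem_singleton_iff] at hα
      rcases hα with rfl | rfl | rfl | rfl <;> rw [hla₀, inner_V3] <;> linarith
  have hdom1 : ∀ α ∈ Δplusk ∪ P1, 0 ≤ ⟪mu m₁ m₂ + (2:ℝ) • ρc, α⟫ := by
    rintro α (hα | hα)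
    · rw [Δplusk_eq] at hα
      rcases hα with rfl | rfl <;> rw [mu2ρc_eq, inner_V3] <;> push_cast <;> linarith
    · rw [P1] at hα
      simp only [Set.mem_insert_iff, Set.mem_singleton_iff] at hα
      rcases hα with rfl | rfl | rfl | rfl <;> rw [mu2ρc_eq, inner_V3] <;> push_cast <;> linarith
  have hVI1 : ∀ v : E3, (InV v ∧ ∀ α ∈ Δplusk ∪ P1, 0 ≤ ⟪v, α⟫) →
      ⟪mu m₁ m₂ + (2:ℝ) • ρc - halfSum (Δplusk ∪ P1) - la₀, v - la₀⟫ ≤ 0 := by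
    rintro v ⟨hv1, hv2⟩
    obtain ⟨a, b, c, rfl⟩ := coords v
    have hr := hv2 (V3 1 (-1) 0) (Or.inl (by rw [Δplusk_eq]; norm_num [V3_inj]))
    rw [inner_V3] at hr
    rw [hx1, hla₀, V3_sub, inner_V3]
    linarith
  rw [lambdaNorm]
  rw [show {r | ∃ D : Set E3, IsPosSystem ΔG2 D ∧
      (∀ α ∈ D, 0 ≤ ⟪mu m₁ m₂ + (2 : ℝ) • ρc, α⟫) ∧
      ∃ la : E3, InV la ∧ (∀ α ∈ D, 0 ≤ ⟪la, α⟫) ∧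
        (∀ v : E3, InV v → (∀ α ∈ D, 0 ≤ ⟪v, α⟫) →
          ‖mu m₁ m₂ + (2 : ℝ) • ρc - halfSum D - la‖ ≤
            ‖mu m₁ m₂ + (2 : ℝ) • ρc - halfSum D - v‖) ∧
        r = ‖la‖} = {‖la₀‖} from ?_, csInf_singleton]
  ext r
  simp only [Set.mem_setOf_eq, Set.mem_singleton_iff]
  constructor
  · rintro ⟨D, hD, hdom, la, hlaV', hlaDom', hmin, rfl⟩
    rcases lambda_D_classify hD hdom with rfl | rfl | rfl
    · have : la = la₀ := by
        refine proj_unique (K := fun v => InV v ∧ ∀ α ∈ Δplusk ∪ P1, 0 ≤ ⟪v, α⟫)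
          ⟨hlaV, hlaDom1⟩ hVI1 ⟨hlaV', hlaDom'⟩ (fun v hv => hmin v hv.1 hv.2)
      rw [this]
    · exfalso
      have := hdom (V3 (-1) 0 1) (Or.inr (by rw [P2]; norm_num [V3_inj]))
      rw [mu2ρc_eq, inner_V3] at this
      push_cast at this
      linarith
    · exfalso
      have := hdom (V3 (-2) 1 1) (Or.inr (by rw [P3]; norm_num [V3_inj]))
      rw [mu2ρc_eq, inner_V3] at this
      push_cast at this
      linarith
  · rintro rfl
    exact ⟨Δplusk ∪ P1, isPos1, hdom1, la₀, hlaV, hlaDom1,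
      fun v hv1 hv2 => proj_min hVI1 v ⟨hv1, hv2⟩, rfl⟩

lemma lambda_reg2 (m₁ m₂ : ℕ) (h : m₁ = m₂) (h1 : 1 ≤ m₁) :
    lambdaNorm (mu m₁ m₂) = ‖V3 0 (-((m₁:ℝ) - 1/2)) ((m₁:ℝ) - 1/2)‖ := by
  have ce : (m₁:ℝ) = (m₂:ℝ) := by exact_mod_cast h
  have c1 : (1:ℝ) ≤ (m₁:ℝ) := by exact_mod_cast h1
  set la₀ : E3 := V3 0 (-((m₁:ℝ) - 1/2)) ((m₁:ℝ) - 1/2) with hla₀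
  have hlaV : InV la₀ := by rw [hla₀, InV_V3]; push_cast; linarith
  have hx2 : mu m₁ m₂ + (2:ℝ) • ρc - halfSum (Δplusk ∪ P2) - la₀ = V3 (-1) (1/2) (1/2) := by
    rw [mu2ρc_eq, halfSum_D2, hla₀, V3_sub, V3_sub, V3_inj]
    refine ⟨by push_cast; linarith, by push_cast; linarith, by push_cast; linarith⟩
  have hlaDom2 : ∀ α ∈ Δplusk ∪ P2, 0 ≤ ⟪la₀, α⟫ := by
    rintro α (hα | hα)
    · rw [Δplusk_eq] at hα
      rcases hα with rfl | rfl <;> rw [hla₀, inner_V3] <;> linarith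
    · rw [P2] at hα
      simp only [Set.mem_insert_iff, Set.mem_singleton_iff] at hα
      rcases hα with rfl | rfl | rfl | rfl <;> rw [hla₀, inner_V3] <;> linarith
  have hdom2 : ∀ α ∈ Δplusk ∪ P2, 0 ≤ ⟪mu m₁ m₂ + (2:ℝ) • ρc, α⟫ := by
    rintro α (hα | hα)
    · rw [Δplusk_eq] at hα
      rcases hα with rfl | rfl <;> rw [mu2ρc_eq, inner_V3] <;> push_cast <;> linarith
    · rw [P2] at hα
      simp only [Set.mem_insert_iff, Set.mem_singleton_iff] at hα
      rcases hα with rfl | rfl | rfl | rfl <;> rw [mu2ρc_eq, inner_V3] <;> push_cast <;> linarith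
  have hVI2 : ∀ v : E3, (InV v ∧ ∀ α ∈ Δplusk ∪ P2, 0 ≤ ⟪v, α⟫) →
      ⟪mu m₁ m₂ + (2:ℝ) • ρc - halfSum (Δplusk ∪ P2) - la₀, v - la₀⟫ ≤ 0 := by
    rintro v ⟨hv1, hv2⟩
    obtain ⟨a, b, c, rfl⟩ := coords v
    have hr := hv2 (V3 2 (-1) (-1)) (Or.inr (by rw [P2]; norm_num [V3_inj]))
    rw [inner_V3] at hr
    rw [hx2, hla₀, V3_sub, inner_V3]
    linarith
  have hx3 : mu m₁ m₂ + (2:ℝ) • ρc - halfSum (Δplusk ∪ P3) - la₀ = V3 1 (-(1/2)) (-(1/2)) := by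
    rw [mu2ρc_eq, halfSum_D3, hla₀, V3_sub, V3_sub, V3_inj]
    refine ⟨by push_cast; linarith, by push_cast; linarith, by push_cast; linarith⟩
  have hlaDom3 : ∀ α ∈ Δplusk ∪ P3, 0 ≤ ⟪la₀, α⟫ := by
    rintro α (hα | hα)
    · rw [Δplusk_eq] at hα
      rcases hα with rfl | rfl <;> rw [hla₀, inner_V3] <;> linarith
    · rw [P3] at hα
      simp only [Set.mem_insert_iff, Set.mem_singleton_iff] at hα
      rcases hα with rfl | rfl | rfl | rfl <;> rw [hla₀, inner_V3] <;> linarith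
  have hdom3 : ∀ α ∈ Δplusk ∪ P3, 0 ≤ ⟪mu m₁ m₂ + (2:ℝ) • ρc, α⟫ := by
    rintro α (hα | hα)
    · rw [Δplusk_eq] at hα
      rcases hα with rfl | rfl <;> rw [mu2ρc_eq, inner_V3] <;> push_cast <;> linarith
    · rw [P3] at hα
      simp only [Set.mem_insert_iff, Set.mem_singleton_iff] at hα
      rcases hα with rfl | rfl | rfl | rfl <;> rw [mu2ρc_eq, inner_V3] <;> push_cast <;> linarith
  have hVI3 : ∀ v : E3, (InV v ∧ ∀ α ∈ Δplusk ∪ P3, 0 ≤ ⟪v, α⟫) →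
      ⟪mu m₁ m₂ + (2:ℝ) • ρc - halfSum (Δplusk ∪ P3) - la₀, v - la₀⟫ ≤ 0 := by
    rintro v ⟨hv1, hv2⟩
    obtain ⟨a, b, c, rfl⟩ := coords v
    have hr := hv2 (V3 (-2) 1 1) (Or.inr (by rw [P3]; norm_num [V3_inj]))
    rw [inner_V3] at hr
    rw [hx3, hla₀, V3_sub, inner_V3]
    linarith
  rw [lambdaNorm]
  rw [show {r | ∃ D : Set E3, IsPosSystem ΔG2 D ∧
      (∀ α ∈ D, 0 ≤ ⟪mu m₁ m₂ + (2 : ℝ) • ρc, α⟫) ∧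
      ∃ la : E3, InV la ∧ (∀ α ∈ D, 0 ≤ ⟪la, α⟫) ∧
        (∀ v : E3, InV v → (∀ α ∈ D, 0 ≤ ⟪v, α⟫) →
          ‖mu m₁ m₂ + (2 : ℝ) • ρc - halfSum D - la‖ ≤
            ‖mu m₁ m₂ + (2 : ℝ) • ρc - halfSum D - v‖) ∧
        r = ‖la‖} = {‖la₀‖} from ?_, csInf_singleton]
  ext r
  simp only [Set.mem_setOf_eq, Set.mem_singleton_iff]
  constructor
  · rintro ⟨D, hD, hdom, la, hlaV', hlaDom', hmin, rfl⟩
    rcases lambda_D_classify hD hdom with rfl | rfl | rfl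
    · exfalso
      have := hdom (V3 1 0 (-1)) (Or.inr (by rw [P1]; norm_num [V3_inj]))
      rw [mu2ρc_eq, inner_V3] at this
      push_cast at this
      linarith
    · have : la = la₀ := by
        refine proj_unique (K := fun v => InV v ∧ ∀ α ∈ Δplusk ∪ P2, 0 ≤ ⟪v, α⟫)
          ⟨hlaV, hlaDom2⟩ hVI2 ⟨hlaV', hlaDom'⟩ (fun v hv => hmin v hv.1 hv.2)
      rw [this]
    · have : la = la₀ := by
        refine proj_unique (K := fun v => InV v ∧ ∀ α ∈ Δplusk ∪ P3, 0 ≤ ⟪v, α⟫)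
          ⟨hlaV, hlaDom3⟩ hVI3 ⟨hlaV', hlaDom'⟩ (fun v hv => hmin v hv.1 hv.2)
      rw [this]
  · rintro rfl
    exact ⟨Δplusk ∪ P2, isPos2, hdom2, la₀, hlaV, hlaDom2,
      fun v hv1 hv2 => proj_min hVI2 v ⟨hv1, hv2⟩, rfl⟩

lemma lambda_reg3 (m₁ m₂ : ℕ) (h1 : m₁ = 0) (h2 : m₂ = 0) :
    lambdaNorm (mu m₁ m₂) = ‖V3 0 0 0‖ := by
  have ce1 : (m₁:ℝ) = 0 := by exact_mod_cast h1
  have ce2 : (m₂:ℝ) = 0 := by exact_mod_cast h2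
  set la₀ : E3 := V3 0 0 0 with hla₀
  have hlaV : InV la₀ := by rw [hla₀, InV_V3]; push_cast; linarith
  have hx2 : mu m₁ m₂ + (2:ℝ) • ρc - halfSum (Δplusk ∪ P2) - la₀ = V3 (-1) 1 0 := by
    rw [mu2ρc_eq, halfSum_D2, hla₀, V3_sub, V3_sub, V3_inj]
    refine ⟨by push_cast; linarith, by push_cast; linarith, by push_cast; linarith⟩
  have hlaDom2 : ∀ α ∈ Δplusk ∪ P2, 0 ≤ ⟪la₀, α⟫ := by
    rintro α (hα | hα)
    · rw [Δplusk_eq] at hα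
      rcases hα with rfl | rfl <;> rw [hla₀, inner_V3] <;> linarith
    · rw [P2] at hα
      simp only [Set.mem_insert_iff, Set.mem_singleton_iff] at hα
      rcases hα with rfl | rfl | rfl | rfl <;> rw [hla₀, inner_V3] <;> linarith
  have hdom2 : ∀ α ∈ Δplusk ∪ P2, 0 ≤ ⟪mu m₁ m₂ + (2:ℝ) • ρc, α⟫ := by
    rintro α (hα | hα)
    · rw [Δplusk_eq] at hα
      rcases hα with rfl | rfl <;> rw [mu2ρc_eq, inner_V3] <;> push_cast <;> linarith
    · rw [P2] at hα
      simp only [Set.mem_insert_iff, Set.mem_singleton_iff] at hα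
      rcases hα with rfl | rfl | rfl | rfl <;> rw [mu2ρc_eq, inner_V3] <;> push_cast <;> linarith
  have hVI2 : ∀ v : E3, (InV v ∧ ∀ α ∈ Δplusk ∪ P2, 0 ≤ ⟪v, α⟫) →
      ⟪mu m₁ m₂ + (2:ℝ) • ρc - halfSum (Δplusk ∪ P2) - la₀, v - la₀⟫ ≤ 0 := by
    rintro v ⟨hv1, hv2⟩
    obtain ⟨a, b, c, rfl⟩ := coords v
    have hr := hv2 (V3 1 (-1) 0) (Or.inl (by rw [Δplusk_eq]; norm_num [V3_inj]))
    rw [inner_V3] at hr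
    rw [hx2, hla₀, V3_sub, inner_V3]
    linarith
  have hx3 : mu m₁ m₂ + (2:ℝ) • ρc - halfSum (Δplusk ∪ P3) - la₀ = V3 1 0 (-1) := by
    rw [mu2ρc_eq, halfSum_D3, hla₀, V3_sub, V3_sub, V3_inj]
    refine ⟨by push_cast; linarith, by push_cast; linarith, by push_cast; linarith⟩
  have hlaDom3 : ∀ α ∈ Δplusk ∪ P3, 0 ≤ ⟪la₀, α⟫ := by
    rintro α (hα | hα)
    · rw [Δplusk_eq] at hα
      rcases hα with rfl | rfl <;> rw [hla₀, inner_V3] <;> linarith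
    · rw [P3] at hα
      simp only [Set.mem_insert_iff, Set.mem_singleton_iff] at hα
      rcases hα with rfl | rfl | rfl | rfl <;> rw [hla₀, inner_V3] <;> linarith
  have hdom3 : ∀ α ∈ Δplusk ∪ P3, 0 ≤ ⟪mu m₁ m₂ + (2:ℝ) • ρc, α⟫ := by
    rintro α (hα | hα)
    · rw [Δplusk_eq] at hα
      rcases hα with rfl | rfl <;> rw [mu2ρc_eq, inner_V3] <;> push_cast <;> linarith
    · rw [P3] at hα
      simp only [Set.mem_insert_iff, Set.mem_singleton_iff] at hα
      rcases hα with rfl | rfl | rfl | rfl <;> rw [mu2ρc_eq, inner_V3] <;> push_cast <;> linarith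
  have hVI3 : ∀ v : E3, (InV v ∧ ∀ α ∈ Δplusk ∪ P3, 0 ≤ ⟪v, α⟫) →
      ⟪mu m₁ m₂ + (2:ℝ) • ρc - halfSum (Δplusk ∪ P3) - la₀, v - la₀⟫ ≤ 0 := by
    rintro v ⟨hv1, hv2⟩
    obtain ⟨a, b, c, rfl⟩ := coords v
    have hr := hv2 (V3 (-1) 0 1) (Or.inr (by rw [P3]; norm_num [V3_inj]))
    rw [inner_V3] at hr
    rw [hx3, hla₀, V3_sub, inner_V3]
    linarith
  rw [lambdaNorm]
  rw [show {r | ∃ D : Set E3, IsPosSystem ΔG2 D ∧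
      (∀ α ∈ D, 0 ≤ ⟪mu m₁ m₂ + (2 : ℝ) • ρc, α⟫) ∧
      ∃ la : E3, InV la ∧ (∀ α ∈ D, 0 ≤ ⟪la, α⟫) ∧
        (∀ v : E3, InV v → (∀ α ∈ D, 0 ≤ ⟪v, α⟫) →
          ‖mu m₁ m₂ + (2 : ℝ) • ρc - halfSum D - la‖ ≤
            ‖mu m₁ m₂ + (2 : ℝ) • ρc - halfSum D - v‖) ∧
        r = ‖la‖} = {‖la₀‖} from ?_, csInf_singleton]
  ext r
  simp only [Set.mem_setOf_eq, Set.mem_singleton_iff]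
  constructor
  · rintro ⟨D, hD, hdom, la, hlaV', hlaDom', hmin, rfl⟩
    rcases lambda_D_classify hD hdom with rfl | rfl | rfl
    · exfalso
      have := hdom (V3 1 0 (-1)) (Or.inr (by rw [P1]; norm_num [V3_inj]))
      rw [mu2ρc_eq, inner_V3] at this
      push_cast at this
      linarith
    · have : la = la₀ := by
        refine proj_unique (K := fun v => InV v ∧ ∀ α ∈ Δplusk ∪ P2, 0 ≤ ⟪v, α⟫)
          ⟨hlaV, hlaDom2⟩ hVI2 ⟨hlaV', hlaDom'⟩ (fun v hv => hmin v hv.1 hv.2)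
      rw [this]
    · have : la = la₀ := by
        refine proj_unique (K := fun v => InV v ∧ ∀ α ∈ Δplusk ∪ P3, 0 ≤ ⟪v, α⟫)
          ⟨hlaV, hlaDom3⟩ hVI3 ⟨hlaV', hlaDom'⟩ (fun v hv => hmin v hv.1 hv.2)
      rw [this]
  · rintro rfl
    exact ⟨Δplusk ∪ P2, isPos2, hdom2, la₀, hlaV, hlaDom2,
      fun v hv1 hv2 => proj_min hVI2 v ⟨hv1, hv2⟩, rfl⟩

lemma lambda_reg5 (m₁ m₂ : ℕ) (h : m₁ = 3*m₂ + 4) :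
    lambdaNorm (mu m₁ m₂) = ‖V3 ((2*(m₂:ℝ)+1)/2) (-(2*(m₂:ℝ)+1)) ((m₂:ℝ)+1/2)‖ := by
  have ce : (m₁:ℝ) = 3*(m₂:ℝ) + 4 := by exact_mod_cast h
  set la₀ : E3 := V3 ((2*(m₂:ℝ)+1)/2) (-(2*(m₂:ℝ)+1)) ((m₂:ℝ)+1/2) with hla₀
  have hlaV : InV la₀ := by rw [hla₀, InV_V3]; push_cast; linarith
  have hx1 : mu m₁ m₂ + (2:ℝ) • ρc - halfSum (Δplusk ∪ P1) - la₀ = V3 (-(1/2)) 0 (1/2) := by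
    rw [mu2ρc_eq, halfSum_D1, hla₀, V3_sub, V3_sub, V3_inj]
    refine ⟨by push_cast; linarith, by push_cast; linarith, by push_cast; linarith⟩
  have hlaDom1 : ∀ α ∈ Δplusk ∪ P1, 0 ≤ ⟪la₀, α⟫ := by
    rintro α (hα | hα)
    · rw [Δplusk_eq] at hα
      rcases hα with rfl | rfl <;> rw [hla₀, inner_V3] <;> linarith
    · rw [P1] at hα
      simp only [Set.mem_insert_iff, Set.mem_singleton_iff] at hα
      rcases hα with rfl | rfl | rfl | rfl <;> rw [hla₀, inner_V3] <;> linarith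
  have hdom1 : ∀ α ∈ Δplusk ∪ P1, 0 ≤ ⟪mu m₁ m₂ + (2:ℝ) • ρc, α⟫ := by
    rintro α (hα | hα)
    · rw [Δplusk_eq] at hα
      rcases hα with rfl | rfl <;> rw [mu2ρc_eq, inner_V3] <;> push_cast <;> linarith
    · rw [P1] at hα
      simp only [Set.mem_insert_iff, Set.mem_singleton_iff] at hα
      rcases hα with rfl | rfl | rfl | rfl <;> rw [mu2ρc_eq, inner_V3] <;> push_cast <;> linarith
  have hVI1 : ∀ v : E3, (InV v ∧ ∀ α ∈ Δplusk ∪ P1, 0 ≤ ⟪v, α⟫) →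
      ⟪mu m₁ m₂ + (2:ℝ) • ρc - halfSum (Δplusk ∪ P1) - la₀, v - la₀⟫ ≤ 0 := by
    rintro v ⟨hv1, hv2⟩
    obtain ⟨a, b, c, rfl⟩ := coords v
    have hr := hv2 (V3 1 0 (-1)) (Or.inr (by rw [P1]; norm_num [V3_inj]))
    rw [inner_V3] at hr
    rw [hx1, hla₀, V3_sub, inner_V3]
    linarith
  have hx2 : mu m₁ m₂ + (2:ℝ) • ρc - halfSum (Δplusk ∪ P2) - la₀ = V3 (1/2) 0 (-(1/2)) := by
    rw [mu2ρc_eq, halfSum_D2, hla₀, V3_sub, V3_sub, V3_inj]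
    refine ⟨by push_cast; linarith, by push_cast; linarith, by push_cast; linarith⟩
  have hlaDom2 : ∀ α ∈ Δplusk ∪ P2, 0 ≤ ⟪la₀, α⟫ := by
    rintro α (hα | hα)
    · rw [Δplusk_eq] at hα
      rcases hα with rfl | rfl <;> rw [hla₀, inner_V3] <;> linarith
    · rw [P2] at hα
      simp only [Set.mem_insert_iff, Set.mem_singleton_iff] at hα
      rcases hα with rfl | rfl | rfl | rfl <;> rw [hla₀, inner_V3] <;> linarith
  have hdom2 : ∀ α ∈ Δplusk ∪ P2, 0 ≤ ⟪mu m₁ m₂ + (2:ℝ) • ρc, α⟫ := by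
    rintro α (hα | hα)
    · rw [Δplusk_eq] at hα
      rcases hα with rfl | rfl <;> rw [mu2ρc_eq, inner_V3] <;> push_cast <;> linarith
    · rw [P2] at hα
      simp only [Set.mem_insert_iff, Set.mem_singleton_iff] at hα
      rcases hα with rfl | rfl | rfl | rfl <;> rw [mu2ρc_eq, inner_V3] <;> push_cast <;> linarith
  have hVI2 : ∀ v : E3, (InV v ∧ ∀ α ∈ Δplusk ∪ P2, 0 ≤ ⟪v, α⟫) →
      ⟪mu m₁ m₂ + (2:ℝ) • ρc - halfSum (Δplusk ∪ P2) - la₀, v - la₀⟫ ≤ 0 := by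
    rintro v ⟨hv1, hv2⟩
    obtain ⟨a, b, c, rfl⟩ := coords v
    have hr := hv2 (V3 (-1) 0 1) (Or.inr (by rw [P2]; norm_num [V3_inj]))
    rw [inner_V3] at hr
    rw [hx2, hla₀, V3_sub, inner_V3]
    linarith
  rw [lambdaNorm]
  rw [show {r | ∃ D : Set E3, IsPosSystem ΔG2 D ∧
      (∀ α ∈ D, 0 ≤ ⟪mu m₁ m₂ + (2 : ℝ) • ρc, α⟫) ∧
      ∃ la : E3, InV la ∧ (∀ α ∈ D, 0 ≤ ⟪la, α⟫) ∧
        (∀ v : E3, InV v → (∀ α ∈ D, 0 ≤ ⟪v, α⟫) →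
          ‖mu m₁ m₂ + (2 : ℝ) • ρc - halfSum D - la‖ ≤
            ‖mu m₁ m₂ + (2 : ℝ) • ρc - halfSum D - v‖) ∧
        r = ‖la‖} = {‖la₀‖} from ?_, csInf_singleton]
  ext r
  simp only [Set.mem_setOf_eq, Set.mem_singleton_iff]
  constructor
  · rintro ⟨D, hD, hdom, la, hlaV', hlaDom', hmin, rfl⟩
    rcases lambda_D_classify hD hdom with rfl | rfl | rfl
    · have : la = la₀ := by
        refine proj_unique (K := fun v => InV v ∧ ∀ α ∈ Δplusk ∪ P1, 0 ≤ ⟪v, α⟫)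
          ⟨hlaV, hlaDom1⟩ hVI1 ⟨hlaV', hlaDom'⟩ (fun v hv => hmin v hv.1 hv.2)
      rw [this]
    · have : la = la₀ := by
        refine proj_unique (K := fun v => InV v ∧ ∀ α ∈ Δplusk ∪ P2, 0 ≤ ⟪v, α⟫)
          ⟨hlaV, hlaDom2⟩ hVI2 ⟨hlaV', hlaDom'⟩ (fun v hv => hmin v hv.1 hv.2)
      rw [this]
    · exfalso
      have := hdom (V3 (-2) 1 1) (Or.inr (by rw [P3]; norm_num [V3_inj]))
      rw [mu2ρc_eq, inner_V3] at this
      push_cast at this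
      linarith
  · rintro rfl
    exact ⟨Δplusk ∪ P2, isPos2, hdom2, la₀, hlaV, hlaDom2,
      fun v hv1 hv2 => proj_min hVI2 v ⟨hv1, hv2⟩, rfl⟩

/-! ### The main theorem -/

set_option maxHeartbeats 1000000 in
/-- For a K-type `μ = m₁ϖ₁ + m₂ϖ₂` of G₂₍₂₎ (so `m₁+m₂` even),
`‖μ‖_spin = ‖μ‖_lambda` iff `(m₁,m₂)` has one of the three listed forms. -/
theorem spin_eq_lambda_iff_G2 (m₁ m₂ : ℕ) (hm : Even (m₁ + m₂)) :
    spinNorm (mu m₁ m₂) = lambdaNorm (mu m₁ m₂) ↔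
    ((∃ a b : ℕ, 1 ≤ a + b ∧ m₁ = a + 3*b + 2 ∧ m₂ = a + b) ∨
     (∃ a b : ℕ, 1 ≤ b ∧ m₁ = 2*a + 3*b + 3 ∧ m₂ + 1 = b) ∨
     (∃ a b : ℕ, 1 ≤ a ∧ m₁ + 1 = a ∧ m₂ = a + 2*b + 1)) := by
  rw [Nat.even_iff] at hm
  have c01 : (0:ℝ) ≤ (m₁:ℝ) := Nat.cast_nonneg m₁
  have c02 : (0:ℝ) ≤ (m₂:ℝ) := Nat.cast_nonneg m₂
  have hC : ((∃ a b : ℕ, 1 ≤ a + b ∧ m₁ = a + 3*b + 2 ∧ m₂ = a + b) ∨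
     (∃ a b : ℕ, 1 ≤ b ∧ m₁ = 2*a + 3*b + 3 ∧ m₂ + 1 = b) ∨
     (∃ a b : ℕ, 1 ≤ a ∧ m₁ + 1 = a ∧ m₂ = a + 2*b + 1)) ↔
      ((1 ≤ m₂ ∧ m₂ + 2 ≤ m₁ ∧ m₁ ≤ 3*m₂ + 2) ∨ 3*m₂ + 6 ≤ m₁ ∨ m₁ + 2 ≤ m₂) := by
    constructor
    · rintro (⟨a, b, h1, h2, h3⟩ | ⟨a, b, h1, h2, h3⟩ | ⟨a, b, h1, h2, h3⟩) <;> omega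
    · rintro (⟨h0, h1, h2⟩ | h | h)
      · exact Or.inl ⟨m₂ - (m₁ - m₂ - 2)/2, (m₁ - m₂ - 2)/2, by omega, by omega, by omega⟩
      · exact Or.inr (Or.inl ⟨(m₁ - 3*m₂ - 6)/2, m₂ + 1, by omega, by omega, by omega⟩)
      · exact Or.inr (Or.inr ⟨m₁ + 1, (m₂ - m₁ - 2)/2, by omega, by omega, by omega⟩)
  rw [hC]
  by_cases hA : m₁ + 2 ≤ m₂
  · have c1 : (m₁:ℝ) + 2 ≤ (m₂:ℝ) := by exact_mod_cast hA
    rw [spinNorm_eq_min, lambda_reg1 m₁ m₂ hA]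
    have e3 : ‖dvec (mu m₁ m₂ - V3 (-1) (-1) 2) + ρc‖ =
        ‖V3 (((m₁:ℝ) - (m₂:ℝ))/2 + 1) (-((m₁:ℝ) + (m₂:ℝ))/2) ((m₂:ℝ) - 1)‖ := by
      rw [norm_eq_iff_inner, sq_B3, inner_V3,
        abs_of_nonneg (by linarith : (0:ℝ) ≤ 3*(m₂:ℝ)-6)]
      ring
    have h31 : ‖dvec (mu m₁ m₂ - V3 (-1) (-1) 2) + ρc‖ ≤
        ‖dvec (mu m₁ m₂ - V3 2 (-2) 0) + ρc‖ := by
      rw [norm_le_iff_inner, sq_B3, sq_B1,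
        abs_of_nonneg (by linarith : (0:ℝ) ≤ 3*(m₂:ℝ)-6)]
      nlinarith [sq_abs ((m₁:ℝ)-4), le_abs_self ((m₁:ℝ)-4), neg_abs_le ((m₁:ℝ)-4), abs_nonneg ((m₁:ℝ)-4)]
    have h32 : ‖dvec (mu m₁ m₂ - V3 (-1) (-1) 2) + ρc‖ ≤
        ‖dvec (mu m₁ m₂ - V3 1 (-2) 1) + ρc‖ := by
      rw [norm_le_iff_inner, sq_B3, sq_B2,
        abs_of_nonneg (by linarith : (0:ℝ) ≤ 3*(m₂:ℝ)-6),
        abs_of_nonneg (by linarith : (0:ℝ) ≤ 3*(m₂:ℝ)-3)]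
      nlinarith [sq_abs ((m₁:ℝ)-3), le_abs_self ((m₁:ℝ)-3), neg_abs_le ((m₁:ℝ)-3), abs_nonneg ((m₁:ℝ)-3)]
    rw [min_eq_right h32, min_eq_right h31]
    exact iff_of_true e3 (Or.inr (Or.inr hA))
  · by_cases hB : 3*m₂ + 6 ≤ m₁
    · have c1 : 3*(m₂:ℝ) + 6 ≤ (m₁:ℝ) := by exact_mod_cast hB
      rw [spinNorm_eq_min, lambda_reg6 m₁ m₂ hB]
      have e1 : ‖dvec (mu m₁ m₂ - V3 2 (-2) 0) + ρc‖ =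
          ‖V3 (((m₁:ℝ) - (m₂:ℝ))/2 - 2) (-((m₁:ℝ) + (m₂:ℝ))/2 + 1) ((m₂:ℝ) + 1)‖ := by
        rw [norm_eq_iff_inner, sq_B1, inner_V3,
          abs_of_nonneg (by linarith : (0:ℝ) ≤ (m₁:ℝ) - 4)]
        ring
      have h12 : ‖dvec (mu m₁ m₂ - V3 2 (-2) 0) + ρc‖ ≤
          ‖dvec (mu m₁ m₂ - V3 1 (-2) 1) + ρc‖ := by
        rw [norm_le_iff_inner, sq_B1, sq_B2,
          abs_of_nonneg (by linarith : (0:ℝ) ≤ (m₁:ℝ) - 4),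
          abs_of_nonneg (by linarith : (0:ℝ) ≤ (m₁:ℝ) - 3)]
        nlinarith [sq_abs (3*(m₂:ℝ)-3), le_abs_self (3*(m₂:ℝ)-3), neg_abs_le (3*(m₂:ℝ)-3), abs_nonneg (3*(m₂:ℝ)-3)]
      have h13 : ‖dvec (mu m₁ m₂ - V3 2 (-2) 0) + ρc‖ ≤
          ‖dvec (mu m₁ m₂ - V3 (-1) (-1) 2) + ρc‖ := by
        rw [norm_le_iff_inner, sq_B1, sq_B3,
          abs_of_nonneg (by linarith : (0:ℝ) ≤ (m₁:ℝ) - 4)]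
        nlinarith [sq_abs (3*(m₂:ℝ)-6), le_abs_self (3*(m₂:ℝ)-6), neg_abs_le (3*(m₂:ℝ)-6), abs_nonneg (3*(m₂:ℝ)-6)]
      rw [min_eq_left (le_min h12 h13)]
      exact iff_of_true e1 (Or.inr (Or.inl hB))
    · by_cases hq : m₁ = 3*m₂ + 4
      · have ce : (m₁:ℝ) = 3*(m₂:ℝ) + 4 := by exact_mod_cast hq
        rw [spinNorm_eq_min, lambda_reg5 m₁ m₂ hq]
        have h1 : ‖V3 ((2*(m₂:ℝ)+1)/2) (-(2*(m₂:ℝ)+1)) ((m₂:ℝ)+1/2)‖ <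
            ‖dvec (mu m₁ m₂ - V3 2 (-2) 0) + ρc‖ := by
          rw [norm_lt_iff_inner, sq_B1, inner_V3,
            abs_of_nonneg (by linarith : (0:ℝ) ≤ (m₁:ℝ) - 4)]
          nlinarith [c02]
        have h2 : ‖V3 ((2*(m₂:ℝ)+1)/2) (-(2*(m₂:ℝ)+1)) ((m₂:ℝ)+1/2)‖ <
            ‖dvec (mu m₁ m₂ - V3 1 (-2) 1) + ρc‖ := by
          rw [norm_lt_iff_inner, sq_B2, inner_V3,
            abs_of_nonneg (by linarith : (0:ℝ) ≤ (m₁:ℝ) - 3)]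
          nlinarith [sq_abs (3*(m₂:ℝ)-3), le_abs_self (3*(m₂:ℝ)-3), neg_abs_le (3*(m₂:ℝ)-3), abs_nonneg (3*(m₂:ℝ)-3)]
        have h3 : ‖V3 ((2*(m₂:ℝ)+1)/2) (-(2*(m₂:ℝ)+1)) ((m₂:ℝ)+1/2)‖ <
            ‖dvec (mu m₁ m₂ - V3 (-1) (-1) 2) + ρc‖ := by
          rw [norm_lt_iff_inner, sq_B3, inner_V3]
          nlinarith [sq_abs (3*(m₂:ℝ)-6), le_abs_self (3*(m₂:ℝ)-6), neg_abs_le (3*(m₂:ℝ)-6), abs_nonneg (3*(m₂:ℝ)-6)]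
        exact iff_of_false (ne_of_gt (lt_min h1 (lt_min h2 h3))) (by omega)
      · by_cases he : m₁ = m₂
        · by_cases h0 : m₁ = 0
          · have h0' : m₂ = 0 := by omega
            have ce1 : (m₁:ℝ) = 0 := by exact_mod_cast h0
            have ce2 : (m₂:ℝ) = 0 := by exact_mod_cast h0'
            rw [spinNorm_eq_min, lambda_reg3 m₁ m₂ h0 h0']
            have h1 : ‖(V3 0 0 0 : E3)‖ < ‖dvec (mu m₁ m₂ - V3 2 (-2) 0) + ρc‖ := by
              rw [norm_lt_iff_inner, sq_B1, inner_V3, ce1, ce2]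
              norm_num
            have h2 : ‖(V3 0 0 0 : E3)‖ < ‖dvec (mu m₁ m₂ - V3 1 (-2) 1) + ρc‖ := by
              rw [norm_lt_iff_inner, sq_B2, inner_V3, ce1, ce2]
              norm_num
            have h3 : ‖(V3 0 0 0 : E3)‖ < ‖dvec (mu m₁ m₂ - V3 (-1) (-1) 2) + ρc‖ := by
              rw [norm_lt_iff_inner, sq_B3, inner_V3, ce1, ce2]
              norm_num
            exact iff_of_false (ne_of_gt (lt_min h1 (lt_min h2 h3))) (by omega)
          · have h1' : 1 ≤ m₁ := by omega
            have ce : (m₁:ℝ) = (m₂:ℝ) := by exact_mod_cast he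
            have c1 : (1:ℝ) ≤ (m₁:ℝ) := by exact_mod_cast h1'
            rw [spinNorm_eq_min, lambda_reg2 m₁ m₂ he h1']
            have h1 : ‖V3 0 (-((m₁:ℝ) - 1/2)) ((m₁:ℝ) - 1/2)‖ <
                ‖dvec (mu m₁ m₂ - V3 2 (-2) 0) + ρc‖ := by
              rw [norm_lt_iff_inner, sq_B1, inner_V3]
              nlinarith [sq_abs ((m₁:ℝ)-4), le_abs_self ((m₁:ℝ)-4), neg_abs_le ((m₁:ℝ)-4), abs_nonneg ((m₁:ℝ)-4)]
            have h2 : ‖V3 0 (-((m₁:ℝ) - 1/2)) ((m₁:ℝ) - 1/2)‖ <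
                ‖dvec (mu m₁ m₂ - V3 1 (-2) 1) + ρc‖ := by
              rw [norm_lt_iff_inner, sq_B2, inner_V3,
                abs_of_nonneg (by linarith : (0:ℝ) ≤ 3*(m₂:ℝ)-3)]
              nlinarith [sq_abs ((m₁:ℝ)-3), le_abs_self ((m₁:ℝ)-3), neg_abs_le ((m₁:ℝ)-3), abs_nonneg ((m₁:ℝ)-3)]
            have h3 : ‖V3 0 (-((m₁:ℝ) - 1/2)) ((m₁:ℝ) - 1/2)‖ <
                ‖dvec (mu m₁ m₂ - V3 (-1) (-1) 2) + ρc‖ := by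
              rw [norm_lt_iff_inner, sq_B3, inner_V3]
              nlinarith [sq_abs (3*(m₂:ℝ)-6), le_abs_self (3*(m₂:ℝ)-6), neg_abs_le (3*(m₂:ℝ)-6), abs_nonneg (3*(m₂:ℝ)-6)]
            exact iff_of_false (ne_of_gt (lt_min h1 (lt_min h2 h3))) (by omega)
        · have hr1 : m₂ + 2 ≤ m₁ := by omega
          have hr2 : m₁ ≤ 3*m₂ + 2 := by omega
          have c1 : (m₂:ℝ) + 2 ≤ (m₁:ℝ) := by exact_mod_cast hr1
          have c2 : (m₁:ℝ) ≤ 3*(m₂:ℝ) + 2 := by exact_mod_cast hr2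
          rw [spinNorm_eq_min, lambda_reg4 m₁ m₂ hr1 hr2]
          by_cases hz : m₂ = 0
          · have hm1 : m₁ = 2 := by omega
            have cz : (m₂:ℝ) = 0 := by exact_mod_cast hz
            have cm : (m₁:ℝ) = 2 := by exact_mod_cast hm1
            have h1 : ‖V3 (((m₁:ℝ) - (m₂:ℝ))/2 - 1) (-((m₁:ℝ) + (m₂:ℝ))/2 + 1) (m₂:ℝ)‖ <
                ‖dvec (mu m₁ m₂ - V3 2 (-2) 0) + ρc‖ := by
              rw [norm_lt_iff_inner, sq_B1, inner_V3, cz, cm]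
              norm_num
            have h2 : ‖V3 (((m₁:ℝ) - (m₂:ℝ))/2 - 1) (-((m₁:ℝ) + (m₂:ℝ))/2 + 1) (m₂:ℝ)‖ <
                ‖dvec (mu m₁ m₂ - V3 1 (-2) 1) + ρc‖ := by
              rw [norm_lt_iff_inner, sq_B2, inner_V3, cz, cm]
              norm_num
            have h3 : ‖V3 (((m₁:ℝ) - (m₂:ℝ))/2 - 1) (-((m₁:ℝ) + (m₂:ℝ))/2 + 1) (m₂:ℝ)‖ <
                ‖dvec (mu m₁ m₂ - V3 (-1) (-1) 2) + ρc‖ := by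
              rw [norm_lt_iff_inner, sq_B3, inner_V3, cz, cm]
              norm_num
            exact iff_of_false (ne_of_gt (lt_min h1 (lt_min h2 h3))) (by omega)
          · have hz1 : 1 ≤ m₂ := by omega
            have cz1 : (1:ℝ) ≤ (m₂:ℝ) := by exact_mod_cast hz1
            have e2 : ‖dvec (mu m₁ m₂ - V3 1 (-2) 1) + ρc‖ =
                ‖V3 (((m₁:ℝ) - (m₂:ℝ))/2 - 1) (-((m₁:ℝ) + (m₂:ℝ))/2 + 1) (m₂:ℝ)‖ := by
              rw [norm_eq_iff_inner, sq_B2, inner_V3,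
                abs_of_nonneg (by linarith : (0:ℝ) ≤ (m₁:ℝ) - 3),
                abs_of_nonneg (by linarith : (0:ℝ) ≤ 3*(m₂:ℝ)-3)]
              ring
            have h21 : ‖dvec (mu m₁ m₂ - V3 1 (-2) 1) + ρc‖ ≤
                ‖dvec (mu m₁ m₂ - V3 2 (-2) 0) + ρc‖ := by
              rw [norm_le_iff_inner, sq_B2, sq_B1,
                abs_of_nonneg (by linarith : (0:ℝ) ≤ (m₁:ℝ) - 3),
                abs_of_nonneg (by linarith : (0:ℝ) ≤ 3*(m₂:ℝ)-3)]
              nlinarith [sq_abs ((m₁:ℝ)-4), le_abs_self ((m₁:ℝ)-4), neg_abs_le ((m₁:ℝ)-4), abs_nonneg ((m₁:ℝ)-4)]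
            have h23 : ‖dvec (mu m₁ m₂ - V3 1 (-2) 1) + ρc‖ ≤
                ‖dvec (mu m₁ m₂ - V3 (-1) (-1) 2) + ρc‖ := by
              rw [norm_le_iff_inner, sq_B2, sq_B3,
                abs_of_nonneg (by linarith : (0:ℝ) ≤ (m₁:ℝ) - 3),
                abs_of_nonneg (by linarith : (0:ℝ) ≤ 3*(m₂:ℝ)-3)]
              nlinarith [sq_abs (3*(m₂:ℝ)-6), le_abs_self (3*(m₂:ℝ)-6), neg_abs_le (3*(m₂:ℝ)-6), abs_nonneg (3*(m₂:ℝ)-6)]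
            rw [min_eq_left h23, min_eq_right h21]
            exact iff_of_true e2 (Or.inl ⟨hz1, hr1, hr2⟩)

end Stmt2
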